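/- arXiv:1203.1707 — 8 statements merged into one kernel-verified Lean document; each statement's English description precedes it below -/
import Mathlib

section
/- Discrete fractional integration by parts: Let d ≥ 1 and let G¹, G² ∈ (ℝ^d)^{N+1} satisfy G¹_0 = 0 and G²_N = 0. Then h ∑_{k=1}^{N} (ᶜΔ^α_− G¹)_k · G²_{k−1} = h ∑_{k=0}^{N−1} G¹_{k+1} · (ᶜΔ^α_+ G²)_k. -/
open Finset Filter
open scoped RealInnerProductSpace Topology

noncomputable section

/-- `ℝ^n` with the euclidean norm. -/
abbrev Euc (n : ℕ) : Type := EuclideanSpace ℝ (Fin n)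

/-- The Grünwald–Letnikov coefficients `α_r = (−α)(1−α)⋯(r−1−α)/r!`, with `α_0 = 1`. -/
def glCoef (α : ℝ) (r : ℕ) : ℝ :=
  (∏ i ∈ Finset.range r, ((i : ℝ) - α)) / (Nat.factorial r : ℝ)

/-- Left discrete fractional derivative `(Δ^α_− G)_k = h^{−α} ∑_{r=0}^{k} α_r G_{k−r}`. -/
def dMinus {n : ℕ} (α h : ℝ) (G : ℕ → Euc n) (k : ℕ) : Euc n :=
  (h ^ (-α)) • ∑ r ∈ Finset.range (k + 1), glCoef α r • G (k - r)

/-- Right discrete fractional derivative `(Δ^α_+ G)_k = h^{−α} ∑_{r=0}^{N−k} α_r G_{k+r}`. -/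
def dPlus {n : ℕ} (N : ℕ) (α h : ℝ) (G : ℕ → Euc n) (k : ℕ) : Euc n :=
  (h ^ (-α)) • ∑ r ∈ Finset.range (N - k + 1), glCoef α r • G (k + r)

/-- Left Caputo discrete fractional derivative `(ᶜΔ^α_− G)_k = h^{−α} ∑_{r=0}^{k} α_r (G_{k−r} − G_0)`. -/
def cdMinus {n : ℕ} (α h : ℝ) (G : ℕ → Euc n) (k : ℕ) : Euc n :=
  dMinus α h (fun j => G j - G 0) k

/-- Right Caputo discrete fractional derivative
`(ᶜΔ^α_+ G)_k = h^{−α} ∑_{r=0}^{N−k} α_r (G_{k+r} − G_N)`. -/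
def cdPlus {n : ℕ} (N : ℕ) (α h : ℝ) (G : ℕ → Euc n) (k : ℕ) : Euc n :=
  dPlus N α h (fun j => G j - G N) k

/-- **Discrete fractional integration by parts.** -/
theorem discrete_fractional_integration_by_parts
    (d N : ℕ) (hd : 1 ≤ d) (hN : 1 ≤ N) (a b : ℝ) (hab : a < b)
    (α : ℝ) (hα : 0 < α) (hα1 : α ≤ 1)
    (G1 G2 : ℕ → Euc d) (hG1 : G1 0 = 0) (hG2 : G2 N = 0) :
    (((b - a) / (N : ℝ)) * ∑ k ∈ Finset.Icc 1 N,
        ⟪cdMinus α ((b - a) / (N : ℝ)) G1 k, G2 (k - 1)⟫)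
      = (((b - a) / (N : ℝ)) * ∑ k ∈ Finset.range N,
        ⟪G1 (k + 1), cdPlus N α ((b - a) / (N : ℝ)) G2 k⟫) := by
  have hG1' : (fun j => G1 j - G1 0) = G1 := by funext j; simp [hG1]
  have hG2' : (fun j => G2 j - G2 N) = G2 := by funext j; simp [hG2]
  have key : (∑ k ∈ Finset.Icc 1 N, ∑ r ∈ Finset.range (k + 1),
        glCoef α r * ⟪G1 (k - r), G2 (k - 1)⟫)
      = ∑ k ∈ Finset.range N, ∑ r ∈ Finset.range (N - k + 1),
        glCoef α r * ⟪G1 (k + 1), G2 (k + r)⟫ := by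
    -- reindex LHS: k = m + 1
    rw [← Finset.Ico_add_one_right_eq_Icc, Finset.sum_Ico_eq_sum_range]
    simp only [Nat.add_sub_cancel]
    have L1 : ∀ m ∈ Finset.range N,
        (∑ r ∈ Finset.range (1 + m + 1), glCoef α r * ⟪G1 (1 + m - r), G2 (1 + m - 1)⟫)
        = ∑ p ∈ Finset.range (m + 1), glCoef α (m - p) * ⟪G1 (p + 1), G2 m⟫ := by
      intro m _
      rw [← Finset.sum_range_reflect]
      have h2 : 1 + m + 1 = m + 2 := by omega
      rw [h2, Finset.sum_range_succ']
      have hz : glCoef α (m + 2 - 1 - 0) * ⟪G1 (1 + m - (m + 2 - 1 - 0)), G2 (1 + m - 1)⟫ = 0 := by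
        have e : 1 + m - (m + 2 - 1 - 0) = 0 := by omega
        rw [e, hG1, inner_zero_left, mul_zero]
      rw [hz, add_zero]
      refine Finset.sum_congr rfl fun p hp => ?_
      have hp' : p < m + 1 := Finset.mem_range.mp hp
      have e1 : m + 2 - 1 - (p + 1) = m - p := by omega
      have e2 : 1 + m - (m - p) = p + 1 := by omega
      have e3 : 1 + m - 1 = m := by omega
      rw [e1, e2, e3]
    rw [Finset.sum_congr rfl L1]
    -- swap order of summation
    have := Finset.sum_Ico_Ico_comm 0 N
      (fun p m => glCoef α (m - p) * ⟪G1 (p + 1), G2 m⟫)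
    simp only [Nat.Ico_zero_eq_range] at this
    rw [← this]
    refine Finset.sum_congr rfl fun p hp => ?_
    have hp' : p < N := Finset.mem_range.mp hp
    rw [Finset.sum_Ico_eq_sum_range, Finset.sum_range_succ]
    have e5 : p + (N - p) = N := by omega
    simp only [e5, hG2, inner_zero_right, mul_zero, add_zero, Nat.add_sub_cancel_left]
  simp only [cdMinus, cdPlus, dMinus, dPlus, hG2, hG1, sub_zero, sum_inner, inner_sum,
    real_inner_smul_left, real_inner_smul_right, ← Finset.mul_sum]
  rw [key]
end
end

section
/- Discrete fractional Cauchy–Lipschitz theorem (left case): Let d ≥ 1, A ∈ ℝ^d, and let F : ℝ^d × [a,b] → ℝ^d be continuous and satisfy ‖F(x₁,t) − F(x₂,t)‖ ≤ K ‖x₁ − x₂‖ for all x₁, x₂ ∈ ℝ^d and t ∈ [a,b], for some K ≥ 0 with h^α K < 1. Then there exists a unique Q ∈ (ℝ^d)^{N+1} such that Q_0 = A and (ᶜΔ^α_− Q)_k = F(Q_k, t_k) for every k = 1,…,N. -/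
open Finset Filter
open scoped RealInnerProductSpace Topology

noncomputable section

/-- **Discrete fractional Cauchy–Lipschitz theorem (left case).** -/
theorem discrete_fractional_cauchy_lipschitz_left
    (d N : ℕ) (hd : 1 ≤ d) (hN : 1 ≤ N) (a b : ℝ) (hab : a < b)
    (α : ℝ) (hα : 0 < α) (hα1 : α ≤ 1) (A : Euc d)
    (F : Euc d → ℝ → Euc d)
    (hFcont : ContinuousOn (fun p : Euc d × ℝ => F p.1 p.2) (Set.univ ×ˢ Set.Icc a b))
    (K : ℝ) (hK : 0 ≤ K)
    (hLip : ∀ x₁ x₂ : Euc d, ∀ t ∈ Set.Icc a b, ‖F x₁ t - F x₂ t‖ ≤ K * ‖x₁ - x₂‖)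
    (hKsmall : ((b - a) / (N : ℝ)) ^ α * K < 1) :
    ∃ Q : ℕ → Euc d,
      (Q 0 = A ∧ ∀ k, 1 ≤ k → k ≤ N →
        cdMinus α ((b - a) / (N : ℝ)) Q k = F (Q k) (a + (k : ℝ) * ((b - a) / (N : ℝ)))) ∧
      ∀ Q' : ℕ → Euc d,
        (Q' 0 = A ∧ ∀ k, 1 ≤ k → k ≤ N →
          cdMinus α ((b - a) / (N : ℝ)) Q' k = F (Q' k) (a + (k : ℝ) * ((b - a) / (N : ℝ)))) →
        ∀ k ≤ N, Q k = Q' k := by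
  clear hd hFcont hα1
  set h : ℝ := (b - a) / (N : ℝ) with hh
  have hNpos : (0:ℝ) < (N : ℝ) := by exact_mod_cast hN
  have hpos : 0 < h := div_pos (sub_pos.mpr hab) hNpos
  have hhα : 0 < h ^ α := Real.rpow_pos_of_pos hpos α
  set t : ℕ → ℝ := fun k => a + (k : ℝ) * h with ht
  have htmem : ∀ k : ℕ, 1 ≤ k → k ≤ N → t k ∈ Set.Icc a b := by
    intro k hk1 hk2
    constructor
    · have : (0:ℝ) ≤ (k : ℝ) * h := mul_nonneg (Nat.cast_nonneg k) hpos.le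
      simp [ht]; linarith
    · have hkN : (k : ℝ) ≤ (N : ℝ) := by exact_mod_cast hk2
      have : (k : ℝ) * h ≤ (N : ℝ) * h := mul_le_mul_of_nonneg_right hkN hpos.le
      have hNh : (N : ℝ) * h = b - a := by
        rw [hh]; field_simp
      simp only [ht]; linarith
  set T : (ℕ → Euc d) → ℕ → Euc d :=
    fun Q k => ∑ r ∈ Finset.Ico 1 (k+1), glCoef α r • (Q (k - r) - Q 0) with hT
  have hgl0 : glCoef α 0 = 1 := by simp [glCoef]
  -- key reformulation of the equation
  have keyiff : ∀ (Q : ℕ → Euc d) (k : ℕ), 1 ≤ k →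
      (cdMinus α h Q k = F (Q k) (t k) ↔
        Q k = Q 0 - T Q k + (h ^ α) • F (Q k) (t k)) := by
    intro Q k hk
    have hsplit : ∑ r ∈ Finset.range (k+1), glCoef α r • (Q (k - r) - Q 0)
        = (Q k - Q 0) + T Q k := by
      rw [Finset.range_eq_Ico, Finset.sum_eq_sum_Ico_succ_bot (Nat.succ_pos k)]
      simp [hgl0]; rfl
    have hinv : h ^ (-α) = (h ^ α)⁻¹ := by
      rw [Real.rpow_neg hpos.le]
    unfold cdMinus dMinus
    rw [hsplit, hinv, inv_smul_eq_iff₀ (ne_of_gt hhα)]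
    constructor
    · intro H
      have : Q k - Q 0 + T Q k = (h ^ α) • F (Q k) (t k) := H
      rw [← this]; abel
    · intro H
      have : Q k - (Q 0 - T Q k + (h ^ α) • F (Q k) (t k)) = 0 := by rw [← H]; abel
      have h2 : Q k - Q 0 + T Q k - (h ^ α) • F (Q k) (t k) = 0 := by
        rw [← this]; abel
      exact sub_eq_zero.mp h2
  have Tcongr : ∀ (Q Q' : ℕ → Euc d) (k : ℕ), 1 ≤ k →
      (∀ j, j < k → Q j = Q' j) → T Q k = T Q' k := by
    intro Q Q' k hk hagree
    apply Finset.sum_congr rfl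
    intro r hr
    rw [Finset.mem_Ico] at hr
    rw [hagree (k - r) (by omega), hagree 0 (by omega)]
  have cdcongr : ∀ (Q Q' : ℕ → Euc d) (k : ℕ),
      (∀ j, j ≤ k → Q j = Q' j) → cdMinus α h Q k = cdMinus α h Q' k := by
    intro Q Q' k hagree
    unfold cdMinus dMinus
    congr 1
    apply Finset.sum_congr rfl
    intro r hr
    simp only [hagree (k - r) (by omega), hagree 0 (by omega)]
  -- the contraction fixed point
  have hcontr : ∀ (c : Euc d) (s : ℝ), s ∈ Set.Icc a b →
      ∃! x : Euc d, x = c + (h ^ α) • F x s := by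
    intro c s hs
    set g : Euc d → Euc d := fun x => c + (h ^ α) • F x s with hg
    set ρ : NNReal := ⟨h ^ α * K, mul_nonneg hhα.le hK⟩ with hρdef
    have hρ : ρ < 1 := by
      rw [← NNReal.coe_lt_coe]
      exact hKsmall
    have hlip : LipschitzWith ρ g := by
      apply LipschitzWith.of_dist_le_mul
      intro x y
      have h1 : g x - g y = (h ^ α) • (F x s - F y s) := by
        simp only [hg, smul_sub]; abel
      rw [dist_eq_norm, h1, norm_smul, Real.norm_eq_abs, abs_of_pos hhα]
      calc h ^ α * ‖F x s - F y s‖ ≤ h ^ α * (K * ‖x - y‖) :=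
            mul_le_mul_of_nonneg_left (hLip x y s hs) hhα.le
        _ = (ρ : ℝ) * dist x y := by show _ = (h ^ α * K) * dist x y; rw [dist_eq_norm]; ring
    have hcw : ContractingWith ρ g := ⟨hρ, hlip⟩
    refine ⟨hcw.fixedPoint g, (hcw.fixedPoint_isFixedPt).symm, ?_⟩
    intro y hy
    exact hcw.fixedPoint_unique hy.symm
  -- existence by induction
  have exist : ∀ n : ℕ, ∃ Q : ℕ → Euc d, Q 0 = A ∧
      ∀ k, 1 ≤ k → k ≤ n → k ≤ N → cdMinus α h Q k = F (Q k) (t k) := by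
    intro n
    induction n with
    | zero => exact ⟨fun _ => A, rfl, fun k hk1 hk2 _ => by omega⟩
    | succ n ih =>
      obtain ⟨Q, hQ0, hQ⟩ := ih
      by_cases hnN : n + 1 ≤ N
      · obtain ⟨x, hx, -⟩ := hcontr (Q 0 - T Q (n+1)) (t (n+1)) (htmem _ (by omega) hnN)
        set Q'' : ℕ → Euc d := Function.update Q (n+1) x with hQ''
        have hag : ∀ j, j ≤ n → Q'' j = Q j := by
          intro j hj
          simp [hQ'', Function.update_of_ne (by omega : j ≠ n + 1)]
        refine ⟨Q'', by rw [hag 0 (by omega), hQ0], ?_⟩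
        intro k hk1 hk2 hk3
        rcases Nat.lt_or_ge k (n+1) with hkn | hkn
        · have hkn' : k ≤ n := by omega
          rw [cdcongr Q'' Q k (fun j hj => hag j (by omega)), hag k hkn']
          exact hQ k hk1 hkn' hk3
        · have hk : k = n + 1 := by omega
          subst hk
          rw [keyiff Q'' (n+1) (by omega)]
          have hQ''k : Q'' (n+1) = x := Function.update_self _ _ _
          have hTeq : T Q'' (n+1) = T Q (n+1) :=
            Tcongr _ _ _ (by omega) (fun j hj => hag j (by omega))
          rw [hQ''k, hTeq, hag 0 (by omega)]
          exact hx
      · exact ⟨Q, hQ0, fun k hk1 hk2 hk3 => hQ k hk1 (by omega) hk3⟩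
  obtain ⟨Q, hQ0, hQ⟩ := exist N
  refine ⟨Q, ⟨hQ0, fun k hk1 hk2 => hQ k hk1 hk2 hk2⟩, ?_⟩
  rintro Q' ⟨hQ'0, hQ'⟩ k
  induction k using Nat.strong_induction_on with
  | _ k ih =>
    intro hkN
    rcases Nat.eq_zero_or_pos k with hk0 | hk1
    · subst hk0; rw [hQ0, hQ'0]
    · have hkeq := (keyiff Q k hk1).mp (hQ k hk1 hkN hkN)
      have hkeq' := (keyiff Q' k hk1).mp (hQ' k hk1 hkN)
      have hagree : ∀ j, j < k → Q j = Q' j := fun j hj => ih j hj (by omega)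
      have hTeq : T Q k = T Q' k := Tcongr _ _ _ hk1 hagree
      obtain ⟨x, -, huniq⟩ := hcontr (Q 0 - T Q k) (t k) (htmem k hk1 hkN)
      have h1 : Q k = x := huniq _ hkeq
      have h2 : Q' k = x := by
        apply huniq
        have hc : Q 0 - T Q k = Q' 0 - T Q' k := by rw [hTeq, hQ0, hQ'0]
        show Q' k = Q 0 - T Q k + h ^ α • F (Q' k) (t k)
        rw [hc]; exact hkeq'
      rw [h1, h2]
end
end

section
/- Discrete fractional Cauchy–Lipschitz theorem (right case): Let d ≥ 1, B ∈ ℝ^d, and let F : ℝ^d × [a,b] → ℝ^d be continuous and satisfy ‖F(x₁,t) − F(x₂,t)‖ ≤ K ‖x₁ − x₂‖ for all x₁, x₂ ∈ ℝ^d and t ∈ [a,b], for some K ≥ 0 with h^α K < 1. Then there exists a unique P ∈ (ℝ^d)^{N+1} such that P_N = B and (ᶜΔ^α_+ P)_k = F(P_k, t_k) for every k = 0,…,N−1. -/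
open Finset Filter
open scoped RealInnerProductSpace Topology

noncomputable section

/-- **Discrete fractional Cauchy–Lipschitz theorem (right case).** -/
theorem discrete_fractional_cauchy_lipschitz_right
    (d N : ℕ) (hd : 1 ≤ d) (hN : 1 ≤ N) (a b : ℝ) (hab : a < b)
    (α : ℝ) (hα : 0 < α) (hα1 : α ≤ 1) (B : Euc d)
    (F : Euc d → ℝ → Euc d)
    (hFcont : ContinuousOn (fun p : Euc d × ℝ => F p.1 p.2) (Set.univ ×ˢ Set.Icc a b))
    (K : ℝ) (hK : 0 ≤ K)
    (hLip : ∀ x₁ x₂ : Euc d, ∀ t ∈ Set.Icc a b, ‖F x₁ t - F x₂ t‖ ≤ K * ‖x₁ - x₂‖)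
    (hKsmall : ((b - a) / (N : ℝ)) ^ α * K < 1) :
    ∃ P : ℕ → Euc d,
      (P N = B ∧ ∀ k, k < N →
        cdPlus N α ((b - a) / (N : ℝ)) P k = F (P k) (a + (k : ℝ) * ((b - a) / (N : ℝ)))) ∧
      ∀ P' : ℕ → Euc d,
        (P' N = B ∧ ∀ k, k < N →
          cdPlus N α ((b - a) / (N : ℝ)) P' k = F (P' k) (a + (k : ℝ) * ((b - a) / (N : ℝ)))) →
        ∀ k ≤ N, P k = P' k := by
  classical
  set h : ℝ := (b - a) / (N : ℝ) with hh_def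
  have hN0 : (0:ℝ) < (N : ℝ) := by exact_mod_cast hN
  have hhpos : 0 < h := div_pos (sub_pos.mpr hab) hN0
  set γ : ℝ := h ^ α with hγ_def
  have hγpos : 0 < γ := Real.rpow_pos_of_pos hhpos α
  have hinv : h ^ (-α) = γ⁻¹ := by
    rw [hγ_def]; exact Real.rpow_neg hhpos.le α
  let tt : ℕ → ℝ := fun k => a + (k : ℝ) * h
  have httmem : ∀ k : ℕ, k ≤ N → tt k ∈ Set.Icc a b := by
    intro k hk
    have h1 : (0:ℝ) ≤ (k : ℝ) * h := mul_nonneg (Nat.cast_nonneg k) hhpos.le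
    have h2 : (k : ℝ) ≤ (N : ℝ) := by exact_mod_cast hk
    have h3 : (k : ℝ) * h ≤ (N : ℝ) * h := mul_le_mul_of_nonneg_right h2 hhpos.le
    have hNh : (N : ℝ) * h = b - a := by rw [hh_def]; field_simp
    constructor
    · show a ≤ a + (k : ℝ) * h; linarith
    · show a + (k : ℝ) * h ≤ b; linarith
  let L : NNReal := ⟨γ * K, mul_nonneg hγpos.le hK⟩
  have hL1 : L < 1 := by rw [← NNReal.coe_lt_one]; exact hKsmall
  have hcon : ∀ k : ℕ, k ≤ N → ∀ cc : Euc d,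
      ContractingWith L (fun x => cc + γ • F x (tt k)) := by
    intro k hk cc
    refine ⟨hL1, LipschitzWith.of_dist_le_mul fun x y => ?_⟩
    have h1 : (cc + γ • F x (tt k)) - (cc + γ • F y (tt k))
        = γ • (F x (tt k) - F y (tt k)) := by rw [smul_sub]; abel
    rw [dist_eq_norm, dist_eq_norm, h1, norm_smul, Real.norm_eq_abs, abs_of_pos hγpos]
    have hcoe : (↑L : ℝ) = γ * K := rfl
    rw [hcoe, mul_assoc]
    exact mul_le_mul_of_nonneg_left (hLip x y _ (httmem k hk)) hγpos.le
  -- the fixed-point construction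
  let fix : ℕ → (ℕ → Euc d) → Euc d := fun j Qp =>
    ContractingWith.fixedPoint
      (fun x => (B - ∑ r ∈ Finset.range j, glCoef α (r+1) • (Qp (j - (r+1)) - B))
        + γ • F x (tt (N - j)))
      (hcon (N - j) (Nat.sub_le N j) _)
  let R : ℕ → ℕ → Euc d := fun j =>
    Nat.rec (motive := fun _ => ℕ → Euc d) (fun _ => B)
      (fun j' Rp m => if m = j' + 1 then fix (j' + 1) Rp else Rp m) j
  let Q : ℕ → Euc d := fun j => R j j
  have hQ0 : Q 0 = B := rfl
  have hRsucc : ∀ j m, R (j+1) m = if m = j+1 then fix (j+1) (R j) else R j m :=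
    fun j m => rfl
  have hQ : ∀ j, Q (j+1) = fix (j+1) (R j) := by
    intro j
    rw [show Q (j+1) = R (j+1) (j+1) from rfl, hRsucc, if_pos rfl]
  have hRQ : ∀ j m, m ≤ j → R j m = Q m := by
    intro j
    induction j with
    | zero =>
      intro m hm
      obtain rfl : m = 0 := Nat.le_zero.mp hm
      rfl
    | succ j ih =>
      intro m hm
      rw [hRsucc]
      by_cases hmj : m = j + 1
      · subst hmj; rw [if_pos rfl]; exact (hQ j).symm
      · rw [if_neg hmj]; exact ih m (by omega)
  -- fixed point equation for Q
  have hfix1 : ∀ j : ℕ, Q (j+1)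
      = (B - ∑ r ∈ Finset.range (j+1), glCoef α (r+1) • (Q (j+1 - (r+1)) - B))
        + γ • F (Q (j+1)) (tt (N - (j+1))) := by
    intro j
    have h1 := (hcon (N - (j+1)) (Nat.sub_le N (j+1))
      (B - ∑ r ∈ Finset.range (j+1), glCoef α (r+1) • (R j ((j+1) - (r+1)) - B))).fixedPoint_isFixedPt
    have h3 : (B - ∑ r ∈ Finset.range (j+1), glCoef α (r+1) • (R j ((j+1) - (r+1)) - B))
        + γ • F (Q (j+1)) (tt (N - (j+1))) = Q (j+1) := by
      rw [hQ j]; exact h1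
    have h4 : (∑ r ∈ Finset.range (j+1), glCoef α (r+1) • (R j ((j+1) - (r+1)) - B))
        = ∑ r ∈ Finset.range (j+1), glCoef α (r+1) • (Q ((j+1) - (r+1)) - B) :=
      Finset.sum_congr rfl fun r _ => by rw [hRQ j ((j+1) - (r+1)) (by omega)]
    rw [h4] at h3
    exact h3.symm
  -- uniqueness of the fixed point
  have hfixu : ∀ j : ℕ, ∀ x : Euc d,
      x = (B - ∑ r ∈ Finset.range (j+1), glCoef α (r+1) • (Q (j+1 - (r+1)) - B))
        + γ • F x (tt (N - (j+1))) → x = Q (j+1) := by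
    intro j x hx
    exact (hcon (N - (j+1)) (Nat.sub_le N (j+1)) _).fixedPoint_unique'
      hx.symm (hfix1 j).symm
  -- the key reformulation of the scheme as a fixed point equation
  have hgl0 : glCoef α 0 = 1 := by simp [glCoef]
  have hEquiv : ∀ (G : ℕ → Euc d) (k : ℕ), k < N → G N = B →
      (cdPlus N α h G k = F (G k) (tt k) ↔
        G k = (B - ∑ r ∈ Finset.range (N - k), glCoef α (r+1) • (G (k + (r+1)) - B))
          + γ • F (G k) (tt k)) := by
    intro G k hkN hGN
    have hsum : (∑ r ∈ Finset.range (N - k + 1), glCoef α r • (G (k + r) - B))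
        = (∑ r ∈ Finset.range (N - k), glCoef α (r+1) • (G (k + (r+1)) - B)) + (G k - B) := by
      rw [Finset.sum_range_succ']
      simp [hgl0]
    have hcd : cdPlus N α h G k
        = γ⁻¹ • ((∑ r ∈ Finset.range (N - k), glCoef α (r+1) • (G (k + (r+1)) - B))
          + (G k - B)) := by
      simp only [cdPlus, dPlus, hGN]
      rw [hinv, hsum]
    rw [hcd, inv_smul_eq_iff₀ hγpos.ne']
    set f := F (G k) (tt k) with hf
    constructor
    · intro h'; rw [← h']; abel
    · intro h'; rw [h']; abel
  -- the solution
  refine ⟨fun m => Q (N - m), ⟨?_, ?_⟩, ?_⟩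
  · show Q (N - N) = B
    rw [Nat.sub_self]; exact hQ0
  · intro k hkN
    refine (hEquiv (fun m => Q (N - m)) k hkN ?_).mpr ?_
    · show Q (N - N) = B
      rw [Nat.sub_self]; exact hQ0
    · obtain ⟨j, hj⟩ : ∃ j, N - k = j + 1 := ⟨N - k - 1, by omega⟩
      have hk' : N - (j+1) = k := by omega
      have h1 := hfix1 j
      rw [hk'] at h1
      show Q (N - k) = (B - ∑ r ∈ Finset.range (N - k),
          glCoef α (r+1) • (Q (N - (k + (r+1))) - B)) + γ • F (Q (N - k)) (tt k)
      rw [hj]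
      have h2 : (∑ r ∈ Finset.range (j+1), glCoef α (r+1) • (Q (N - (k + (r+1))) - B))
          = ∑ r ∈ Finset.range (j+1), glCoef α (r+1) • (Q (j+1 - (r+1)) - B) :=
        Finset.sum_congr rfl fun r _ => by
          have : N - (k + (r+1)) = j + 1 - (r+1) := by omega
          rw [this]
      rw [h2]
      exact h1
  · rintro P' ⟨hP'N, hP'eq⟩
    have main : ∀ j, j ≤ N → P' (N - j) = Q j := by
      intro j
      induction j using Nat.strong_induction_on with
      | _ j ih =>
        intro hjN
        obtain _ | j := j
        · rw [Nat.sub_zero, hQ0]; exact hP'N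
        · have hkN : N - (j+1) < N := by omega
          have heq := hP'eq (N - (j+1)) hkN
          have heq2 := (hEquiv P' (N - (j+1)) hkN hP'N).mp heq
          have hN1 : N - (N - (j+1)) = j + 1 := by omega
          rw [hN1] at heq2
          have hsum3 : (∑ r ∈ Finset.range (j+1),
                glCoef α (r+1) • (P' ((N - (j+1)) + (r+1)) - B))
              = ∑ r ∈ Finset.range (j+1), glCoef α (r+1) • (Q (j+1 - (r+1)) - B) := by
            refine Finset.sum_congr rfl fun r hr => ?_
            have hr' : r < j + 1 := Finset.mem_range.mp hr
            have h5 : (N - (j+1)) + (r+1) = N - (j+1 - (r+1)) := by omega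
            rw [h5, ih (j+1 - (r+1)) (by omega) (by omega)]
          rw [hsum3] at heq2
          have h6 : tt (N - (j+1)) = tt (N - (j+1)) := rfl
          exact hfixu j _ heq2
    intro k hk
    have h6 := main (N - k) (Nat.sub_le N k)
    rw [Nat.sub_sub_self hk] at h6
    exact h6.symm
end
end

section
/- Stability of order 1 of the discrete state variable: Let U, Ū ∈ (ℝ^m)^{N+1}. Then there exists a constant C₁ ≥ 0 such that for every real ε with |ε| < 1 and every k = 0,…,N, ‖Q^{U+εŪ}_k − Q^{U}_k‖ ≤ C₁ |ε|. -/
open Finset Filter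
open scoped RealInnerProductSpace Topology

noncomputable section

lemma abs_glCoef_le_one {α : ℝ} (hα : 0 < α) (hα1 : α ≤ 1) (r : ℕ) : |glCoef α r| ≤ 1 := by
  have hfac : (0:ℝ) < (Nat.factorial r : ℝ) := by exact_mod_cast r.factorial_pos
  rw [glCoef, abs_div, abs_of_pos hfac, div_le_one hfac, Finset.abs_prod]
  calc ∏ i ∈ Finset.range r, |(i:ℝ) - α| ≤ ∏ i ∈ Finset.range r, ((i:ℝ) + 1) := by
        apply Finset.prod_le_prod (fun i _ => abs_nonneg _)
        intro i _
        have h0 : (0:ℝ) ≤ (i:ℝ) := Nat.cast_nonneg i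
        rw [abs_le]
        constructor <;> linarith
    _ = (Nat.factorial r : ℝ) := by
        exact_mod_cast congrArg (Nat.cast (R := ℝ)) (Finset.prod_range_add_one_eq_factorial r)

lemma glCoef_zero (α : ℝ) : glCoef α 0 = 1 := by simp [glCoef]

set_option maxHeartbeats 1000000 in
/-- **Stability of order 1 of the discrete state variable.** -/
theorem stability_order_one
    (d m N : ℕ) (hd : 1 ≤ d) (hm : 1 ≤ m) (hN : 1 ≤ N)
    (a b : ℝ) (hab : a < b) (α : ℝ) (hα : 0 < α) (hα1 : α ≤ 1)
    (A : Euc d)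
    (f : Euc d → Euc m → ℝ → Euc d)
    (hf : ContDiff ℝ 2 fun p : Euc d × Euc m × ℝ => f p.1 p.2.1 p.2.2)
    (M : ℝ) (hM : 0 ≤ M)
    (hLip : ∀ (x₁ x₂ : Euc d) (v : Euc m), ∀ t ∈ Set.Icc a b,
      ‖f x₁ v t - f x₂ v t‖ ≤ M * ‖x₁ - x₂‖)
    (hMsmall : 2 * ((b - a) / (N : ℝ)) ^ α * M < 1)
    -- `SQ V` is the discrete state variable associated to the discrete control `V`
    (SQ : (ℕ → Euc m) → ℕ → Euc d)
    (hSQ : ∀ V : ℕ → Euc m, SQ V 0 = A ∧ ∀ k, 1 ≤ k → k ≤ N →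
      cdMinus α ((b - a) / (N : ℝ)) (SQ V) k
        = f (SQ V k) (V k) (a + (k : ℝ) * ((b - a) / (N : ℝ))))
    (U Ubar : ℕ → Euc m) :
    ∃ C₁ ≥ (0 : ℝ), ∀ ε : ℝ, |ε| < 1 → ∀ k ≤ N,
      ‖SQ (fun j => U j + ε • Ubar j) k - SQ U k‖ ≤ C₁ * |ε| := by
  set h : ℝ := (b - a) / (N : ℝ) with hh_def
  have hNpos : (0:ℝ) < (N : ℝ) := by exact_mod_cast hN
  have hh : 0 < h := div_pos (by linarith) hNpos
  have hhα : 0 < h ^ α := Real.rpow_pos_of_pos hh α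
  have hf1 : ContDiff ℝ 1 fun p : Euc d × Euc m × ℝ => f p.1 p.2.1 p.2.2 :=
    hf.of_le (by norm_num)
  -- Lipschitz-in-ε constants
  have hKex : ∀ k : ℕ, ∃ C : ℝ, 0 ≤ C ∧ ∀ ε : ℝ, |ε| < 1 →
      ‖f (SQ U k) (U k + ε • Ubar k) (a + (k:ℝ)*h) - f (SQ U k) (U k) (a + (k:ℝ)*h)‖
        ≤ C * |ε| := by
    intro k
    set g : ℝ → Euc d := fun s => f (SQ U k) (U k + s • Ubar k) (a + (k:ℝ)*h) with hg_def
    have hg : ContDiff ℝ 1 g := by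
      have hin : ContDiff ℝ 1 fun s : ℝ =>
          ((SQ U k, (U k + s • Ubar k, a + (k:ℝ)*h)) : Euc d × Euc m × ℝ) :=
        contDiff_const.prodMk ((contDiff_const.add (contDiff_id.smul contDiff_const)).prodMk
          contDiff_const)
      exact hf1.comp hin
    obtain ⟨C, hC⟩ := (isCompact_Icc (a := (-1:ℝ)) (b := 1)).exists_bound_of_continuousOn
      ((hg.continuous_deriv le_rfl).continuousOn (s := Set.Icc (-1:ℝ) 1))
    have hC0 : 0 ≤ C := le_trans (norm_nonneg _) (hC 0 (by norm_num))
    refine ⟨C, hC0, ?_⟩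
    intro ε hε
    have hmem : ε ∈ Set.Icc (-1:ℝ) 1 := by
      rcases abs_lt.mp hε with ⟨h1, h2⟩; exact ⟨le_of_lt h1, le_of_lt h2⟩
    have h0mem : (0:ℝ) ∈ Set.Icc (-1:ℝ) 1 := by norm_num
    have hmv := (convex_Icc (-1:ℝ) 1).norm_image_sub_le_of_norm_deriv_le
      (fun x _ => (hg.differentiable one_ne_zero).differentiableAt) hC h0mem hmem
    simpa [g, Real.norm_eq_abs] using hmv
  choose K hK0 hK using hKex
  set L : ℝ := ∑ j ∈ Finset.range (N+1), K j with hL_def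
  have hL0 : 0 ≤ L := Finset.sum_nonneg (fun j _ => hK0 j)
  have hL : ∀ k ≤ N, K k ≤ L := fun k hk =>
    Finset.single_le_sum (fun j _ => hK0 j) (Finset.mem_range.mpr (by omega))
  set c : ℝ := 2 * h ^ α * L with hc_def
  have hc0 : 0 ≤ c := by
    have : (0:ℝ) ≤ 2 * h ^ α := by positivity
    exact mul_nonneg this hL0
  refine ⟨c * 3 ^ N, by positivity, ?_⟩
  intro ε hε
  set V : ℕ → Euc m := fun j => U j + ε • Ubar j with hV_def
  set e : ℕ → Euc d := fun j => SQ V j - SQ U j with he_def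
  have he0 : e 0 = 0 := by simp [he_def, (hSQ V).1, (hSQ U).1]
  -- key identity
  have hkey : ∀ k, 1 ≤ k → k ≤ N →
      e k = (h ^ α) • (f (SQ V k) (V k) (a + (k:ℝ)*h) - f (SQ U k) (U k) (a + (k:ℝ)*h))
        - ∑ r ∈ Finset.range k, glCoef α (r+1) • e (k - (r+1)) := by
    intro k hk1 hkN
    have hVeq := (hSQ V).2 k hk1 hkN
    have hUeq := (hSQ U).2 k hk1 hkN
    have hS : cdMinus α h (SQ V) k - cdMinus α h (SQ U) k
        = (h ^ (-α)) • ∑ r ∈ Finset.range (k+1), glCoef α r • e (k - r) := by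
      simp only [cdMinus, dMinus]
      rw [← smul_sub, ← Finset.sum_sub_distrib]
      congr 1
      apply Finset.sum_congr rfl
      intro r _
      rw [← smul_sub]
      congr 1
      rw [(hSQ V).1, (hSQ U).1]
      simp only [he_def]
      abel
    have hS2 : (h ^ (-α)) • ∑ r ∈ Finset.range (k+1), glCoef α r • e (k - r)
        = f (SQ V k) (V k) (a + (k:ℝ)*h) - f (SQ U k) (U k) (a + (k:ℝ)*h) := by
      rw [← hS, hVeq, hUeq]
    have hinv : h ^ α * h ^ (-α) = 1 := by
      rw [← Real.rpow_add hh]; simp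
    have hS3 : ∑ r ∈ Finset.range (k+1), glCoef α r • e (k - r)
        = (h ^ α) • (f (SQ V k) (V k) (a + (k:ℝ)*h) - f (SQ U k) (U k) (a + (k:ℝ)*h)) := by
      calc ∑ r ∈ Finset.range (k+1), glCoef α r • e (k - r)
          = (h ^ α * h ^ (-α)) • ∑ r ∈ Finset.range (k+1), glCoef α r • e (k - r) := by
            rw [hinv, one_smul]
        _ = (h ^ α) • ((h ^ (-α)) • ∑ r ∈ Finset.range (k+1), glCoef α r • e (k - r)) := by
            rw [mul_smul]
        _ = _ := by rw [hS2]
    rw [Finset.sum_range_succ'] at hS3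
    simp only [glCoef_zero, one_smul, Nat.sub_zero] at hS3
    have := eq_sub_of_add_eq ((add_comm _ _).trans hS3)
    exact this
  -- norm estimate
  have hNh : (N:ℝ) * h = b - a := by
    rw [hh_def]; field_simp [hNpos.ne']
  have hbound : ∀ k, 1 ≤ k → k ≤ N →
      ‖e k‖ ≤ 2 * (h ^ α * (K k * |ε|)) + 2 * ∑ r ∈ Finset.range k, ‖e (k - (r+1))‖ := by
    intro k hk1 hkN
    have hkcast : (k:ℝ) ≤ (N:ℝ) := by exact_mod_cast hkN
    have ht : a + (k:ℝ)*h ∈ Set.Icc a b := by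
      constructor
      · have : 0 ≤ (k:ℝ)*h := mul_nonneg (Nat.cast_nonneg k) hh.le
        linarith
      · have : (k:ℝ)*h ≤ (N:ℝ)*h := mul_le_mul_of_nonneg_right hkcast hh.le
        linarith [hNh]
    have h1 : ‖f (SQ V k) (V k) (a + (k:ℝ)*h) - f (SQ U k) (U k) (a + (k:ℝ)*h)‖
        ≤ M * ‖e k‖ + K k * |ε| := by
      have hsplit : f (SQ V k) (V k) (a + (k:ℝ)*h) - f (SQ U k) (U k) (a + (k:ℝ)*h)
          = (f (SQ V k) (V k) (a + (k:ℝ)*h) - f (SQ U k) (V k) (a + (k:ℝ)*h))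
            + (f (SQ U k) (V k) (a + (k:ℝ)*h) - f (SQ U k) (U k) (a + (k:ℝ)*h)) := by abel
      rw [hsplit]
      refine le_trans (norm_add_le _ _) (add_le_add ?_ ?_)
      · exact hLip _ _ _ _ ht
      · have hK' := hK k ε hε
        simpa [hV_def] using hK'
    have h2 : ‖e k‖ ≤ h ^ α * M * ‖e k‖ + h ^ α * (K k * |ε|)
        + ∑ r ∈ Finset.range k, ‖e (k - (r+1))‖ := by
      have hk' := hkey k hk1 hkN
      calc ‖e k‖
          = ‖(h ^ α) • (f (SQ V k) (V k) (a + (k:ℝ)*h) - f (SQ U k) (U k) (a + (k:ℝ)*h))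
              - ∑ r ∈ Finset.range k, glCoef α (r+1) • e (k - (r+1))‖ := by rw [hk']
        _ ≤ ‖(h ^ α) • (f (SQ V k) (V k) (a + (k:ℝ)*h) - f (SQ U k) (U k) (a + (k:ℝ)*h))‖
              + ‖∑ r ∈ Finset.range k, glCoef α (r+1) • e (k - (r+1))‖ := norm_sub_le _ _
        _ ≤ _ := ?_
      refine add_le_add ?_ ?_
      · rw [norm_smul, Real.norm_eq_abs, abs_of_pos hhα]
        calc h ^ α * ‖f (SQ V k) (V k) (a + (k:ℝ)*h) - f (SQ U k) (U k) (a + (k:ℝ)*h)‖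
            ≤ h ^ α * (M * ‖e k‖ + K k * |ε|) := mul_le_mul_of_nonneg_left h1 hhα.le
          _ = h ^ α * M * ‖e k‖ + h ^ α * (K k * |ε|) := by ring
      · refine le_trans (norm_sum_le _ _) (Finset.sum_le_sum ?_)
        intro r _
        rw [norm_smul, Real.norm_eq_abs]
        exact mul_le_of_le_one_left (norm_nonneg _) (abs_glCoef_le_one hα hα1 (r+1))
    have hhm : h ^ α * M < 1/2 := by
      rw [hh_def] at *
      linarith [hMsmall]
    have hx : 0 ≤ ‖e k‖ := norm_nonneg _
    have hint : 0 ≤ (1 - 2 * (h ^ α * M)) * ‖e k‖ :=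
      mul_nonneg (by linarith) hx
    nlinarith [h2, hint]
  -- main induction
  have main : ∀ k, k ≤ N → ‖e k‖ ≤ c * 3 ^ k * |ε| := by
    intro k
    induction k using Nat.strong_induction_on with
    | _ k IH =>
      intro hkN
      rcases Nat.eq_zero_or_pos k with rfl | hk1
      · rw [he0]
        simp only [norm_zero, pow_zero, mul_one]
        positivity
      · have hb := hbound k hk1 hkN
        have hsum : ∑ r ∈ Finset.range k, ‖e (k - (r+1))‖
            ≤ ∑ r ∈ Finset.range k, c * 3 ^ (k - (r+1)) * |ε| := by
          apply Finset.sum_le_sum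
          intro r hr
          have hr' : r < k := Finset.mem_range.mp hr
          exact IH (k - (r+1)) (by omega) (by omega)
        have hgeom : ∑ r ∈ Finset.range k, (c * 3 ^ (k - (r+1)) * |ε|)
            = c * ((3 ^ k - 1)/2) * |ε| := by
          have hcongr : ∀ r ∈ Finset.range k, c * (3:ℝ) ^ (k - (r+1)) * |ε|
              = c * (3:ℝ) ^ (k - 1 - r) * |ε| := by
            intro r hr
            have hrw : k - (r+1) = k - 1 - r := by omega
            rw [hrw]
          rw [Finset.sum_congr rfl hcongr]
          have hrefl : ∑ r ∈ Finset.range k, c * (3:ℝ) ^ (k - 1 - r) * |ε|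
              = ∑ r ∈ Finset.range k, c * (3:ℝ) ^ r * |ε| :=
            Finset.sum_range_reflect (fun j => c * (3:ℝ) ^ j * |ε|) k
          rw [hrefl]
          have hg : ∑ r ∈ Finset.range k, (3:ℝ) ^ r = ((3:ℝ) ^ k - 1)/(3 - 1) :=
            geom_sum_eq (by norm_num) k
          calc ∑ r ∈ Finset.range k, c * (3:ℝ) ^ r * |ε|
              = c * (∑ r ∈ Finset.range k, (3:ℝ) ^ r) * |ε| := by
                rw [Finset.mul_sum, Finset.sum_mul]
            _ = c * ((3 ^ k - 1)/2) * |ε| := by rw [hg]; ring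
        have hKL : K k ≤ L := hL k hkN
        have h3 : 2 * (h ^ α * (K k * |ε|)) ≤ c * |ε| := by
          have hKe : K k * |ε| ≤ L * |ε| := mul_le_mul_of_nonneg_right hKL (abs_nonneg ε)
          calc 2 * (h ^ α * (K k * |ε|)) ≤ 2 * (h ^ α * (L * |ε|)) := by nlinarith [hhα.le]
            _ = c * |ε| := by rw [hc_def]; ring
        have hsum' : 2 * ∑ r ∈ Finset.range k, ‖e (k - (r+1))‖
            ≤ 2 * (c * ((3 ^ k - 1)/2) * |ε|) := by
          have := hsum.trans_eq hgeom
          linarith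
        calc ‖e k‖ ≤ 2 * (h ^ α * (K k * |ε|))
              + 2 * ∑ r ∈ Finset.range k, ‖e (k - (r+1))‖ := hb
          _ ≤ c * |ε| + 2 * (c * ((3 ^ k - 1)/2) * |ε|) := add_le_add h3 hsum'
          _ = c * 3 ^ k * |ε| := by ring
  intro k hkN
  have h3k : (3:ℝ) ^ k ≤ 3 ^ N := pow_le_pow_right₀ (by norm_num) hkN
  calc ‖SQ V k - SQ U k‖ = ‖e k‖ := rfl
    _ ≤ c * 3 ^ k * |ε| := main k hkN
    _ ≤ c * 3 ^ N * |ε| :=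
        mul_le_mul_of_nonneg_right (mul_le_mul_of_nonneg_left h3k hc0) (abs_nonneg ε)
end
end

section
/- Stability of order 2 of the discrete state variable: Let U, Ū ∈ (ℝ^m)^{N+1}, and let Q̄ ∈ (ℝ^d)^{N+1} be the unique sequence with Q̄_0 = 0 and (ᶜΔ^α_− Q̄)_k = ∂f/∂x(Q^{U}_k, U_k, t_k) Q̄_k + ∂f/∂v(Q^{U}_k, U_k, t_k) Ū_k for k = 1,…,N. Then there exists a constant C ≥ 0 such that for every real ε with |ε| < 1 and every k = 0,…,N, ‖Q^{U+εŪ}_k − Q^{U}_k − ε Q̄_k‖ ≤ C ε². -/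
set_option maxHeartbeats 1000000


open Finset Filter
open scoped RealInnerProductSpace Topology

noncomputable section

lemma cd_shift {n : ℕ} {α h : ℝ} (hh : 0 < h) {G : ℕ → Euc n} {k : ℕ} {w : Euc n}
    (hG : cdMinus α h G k = w) :
    (G k - G 0) + ∑ r ∈ Finset.range k, glCoef α (r+1) • (G (k-(r+1)) - G 0) = h ^ α • w := by
  unfold cdMinus dMinus at hG
  have hne : (h : ℝ) ^ (-α) ≠ 0 := by
    positivity
  have hsum : ∑ r ∈ Finset.range (k+1), glCoef α r • (G (k-r) - G 0) = h ^ α • w := by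
    have := congrArg (fun x => (h ^ α : ℝ) • x) hG
    simp only [smul_smul, ← Real.rpow_add hh, add_neg_cancel, Real.rpow_zero, one_smul] at this
    exact this
  rw [Finset.sum_range_succ'] at hsum
  simp only [glCoef_zero, one_smul, Nat.sub_zero] at hsum
  rw [add_comm] at hsum
  exact hsum

lemma key_combine {n : ℕ} {α h : ℝ} (hh : 0 < h) {G1 G2 G3 : ℕ → Euc n}
    {w1 w2 w3 : Euc n} (ε : ℝ) {k : ℕ}
    (h1 : cdMinus α h G1 k = w1) (h2 : cdMinus α h G2 k = w2) (h3 : cdMinus α h G3 k = w3)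
    (hG0 : G1 0 = G2 0) (hG30 : G3 0 = 0) :
    (G1 k - G2 k - ε • G3 k) + ∑ r ∈ Finset.range k,
        glCoef α (r+1) • (G1 (k-(r+1)) - G2 (k-(r+1)) - ε • G3 (k-(r+1)))
      = h ^ α • (w1 - w2 - ε • w3) := by
  have E1 := cd_shift hh h1
  have E2 := cd_shift hh h2
  have E3 := cd_shift hh h3
  have hpt : ∀ j, G1 j - G2 j - ε • G3 j
      = (G1 j - G1 0) - (G2 j - G2 0) - ε • (G3 j - G3 0) := by
    intro j; rw [hG30, sub_zero, hG0]; abel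
  have hrhs : h ^ α • (w1 - w2 - ε • w3)
      = (h ^ α • w1) - (h ^ α • w2) - ε • (h ^ α • w3) := by
    rw [smul_sub, smul_sub, smul_comm]
  rw [hrhs, ← E1, ← E2, ← E3]
  simp only [hpt, hG30, sub_zero, smul_add, smul_sub, Finset.smul_sum,
    Finset.sum_sub_distrib, smul_smul, mul_comm ε, smul_zero]
  abel

lemma taylor2 {E F : Type*} [NormedAddCommGroup E] [NormedSpace ℝ E]
    [FiniteDimensional ℝ E] [NormedAddCommGroup F] [NormedSpace ℝ F]
    (g : E → F) (hg : ContDiff ℝ 2 g) (p₀ : E) (ρ : ℝ) :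
    ∃ K, 0 ≤ K ∧ ∀ u : E, ‖u‖ ≤ ρ →
      ‖g (p₀ + u) - g p₀ - fderiv ℝ g p₀ u‖ ≤ K * ‖u‖ ^ 2 := by
  have hg1 : ContDiff ℝ 1 (fderiv ℝ g) := hg.fderiv_right (by norm_num)
  have hcont : Continuous fun x => fderiv ℝ (fderiv ℝ g) x :=
    hg1.continuous_fderiv (by norm_num)
  obtain ⟨C, hC⟩ := (isCompact_closedBall p₀ ρ).exists_bound_of_continuousOn
    (f := fun x => fderiv ℝ (fderiv ℝ g) x) hcont.continuousOn
  refine ⟨max C 0, le_max_right _ _, fun u hu => ?_⟩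
  set K := max C 0 with hK
  have hK0 : 0 ≤ K := le_max_right _ _
  -- Lipschitz bound for fderiv g on the ball of radius ‖u‖
  have hball : Metric.closedBall p₀ ‖u‖ ⊆ Metric.closedBall p₀ ρ :=
    Metric.closedBall_subset_closedBall hu
  have hlip : ∀ x ∈ Metric.closedBall p₀ ‖u‖, ‖fderiv ℝ (fderiv ℝ g) x‖ ≤ K :=
    fun x hx => le_trans (hC x (hball hx)) (le_max_left _ _)
  have hdiff1 : ∀ x ∈ Metric.closedBall p₀ ‖u‖, DifferentiableAt ℝ (fderiv ℝ g) x :=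
    fun x _ => (hg1.differentiable (by norm_num)).differentiableAt
  have hbnd : ∀ x ∈ Metric.closedBall p₀ ‖u‖, ‖fderiv ℝ g x - fderiv ℝ g p₀‖ ≤ K * ‖u‖ := by
    intro x hx
    have h1 : ‖fderiv ℝ g x - fderiv ℝ g p₀‖ ≤ K * ‖x - p₀‖ :=
      Convex.norm_image_sub_le_of_norm_fderiv_le hdiff1 hlip (convex_closedBall p₀ ‖u‖)
        (Metric.mem_closedBall_self (norm_nonneg u)) hx
    have h2 : ‖x - p₀‖ ≤ ‖u‖ := by rw [← dist_eq_norm]; exact Metric.mem_closedBall.mp hx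
    exact h1.trans (mul_le_mul_of_nonneg_left h2 hK0)
  have hdiff : ∀ x ∈ Metric.closedBall p₀ ‖u‖, DifferentiableAt ℝ g x :=
    fun x _ => (hg.differentiable (by norm_num)).differentiableAt
  have hmem : p₀ + u ∈ Metric.closedBall p₀ ‖u‖ := by
    simp [Metric.mem_closedBall, dist_eq_norm]
  have := (convex_closedBall p₀ ‖u‖).norm_image_sub_le_of_norm_fderiv_le'
    hdiff hbnd (Metric.mem_closedBall_self (norm_nonneg u)) hmem
  simpa [add_sub_cancel_left, sq, mul_assoc] using this

lemma norm_from_eq {n : ℕ} {α : ℝ} {X W : Euc n} {k : ℕ} {Y : ℕ → Euc n}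
    (hEq : X + ∑ r ∈ Finset.range k, glCoef α (r+1) • Y r = W) :
    ‖X‖ ≤ ‖W‖ + ∑ r ∈ Finset.range k, |glCoef α (r+1)| * ‖Y r‖ := by
  have hX : X = W - ∑ r ∈ Finset.range k, glCoef α (r+1) • Y r := eq_sub_of_add_eq hEq
  rw [hX]
  refine (norm_sub_le _ _).trans (add_le_add le_rfl ?_)
  refine (norm_sum_le _ _).trans ?_
  refine Finset.sum_le_sum fun r _ => ?_
  rw [norm_smul, Real.norm_eq_abs]

lemma absorb_ineq {x hα A S M ε : ℝ}
    (h1 : x ≤ hα * (A * ε ^ 2 + M * x) + S * ε ^ 2)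
    (h2 : hα * M * x ≤ (1/2) * x) :
    x ≤ (2 * hα * A + 2 * S) * ε ^ 2 := by nlinarith [h1, h2]

/-- **Stability of order 2 of the discrete state variable.** -/
theorem stability_order_two
    (d m N : ℕ) (hd : 1 ≤ d) (hm : 1 ≤ m) (hN : 1 ≤ N)
    (a b : ℝ) (hab : a < b) (α : ℝ) (hα : 0 < α) (hα1 : α ≤ 1)
    (A : Euc d)
    (f : Euc d → Euc m → ℝ → Euc d)
    (hf : ContDiff ℝ 2 fun p : Euc d × Euc m × ℝ => f p.1 p.2.1 p.2.2)
    (M : ℝ) (hM : 0 ≤ M)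
    (hLip : ∀ (x₁ x₂ : Euc d) (v : Euc m), ∀ t ∈ Set.Icc a b,
      ‖f x₁ v t - f x₂ v t‖ ≤ M * ‖x₁ - x₂‖)
    (hMsmall : 2 * ((b - a) / (N : ℝ)) ^ α * M < 1)
    -- `SQ V` is the discrete state variable associated to the discrete control `V`
    (SQ : (ℕ → Euc m) → ℕ → Euc d)
    (hSQ : ∀ V : ℕ → Euc m, SQ V 0 = A ∧ ∀ k, 1 ≤ k → k ≤ N →
      cdMinus α ((b - a) / (N : ℝ)) (SQ V) k
        = f (SQ V k) (V k) (a + (k : ℝ) * ((b - a) / (N : ℝ))))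
    (U Ubar : ℕ → Euc m)
    -- `Qbar` is the solution of the linearised discrete fractional Cauchy problem
    (Qbar : ℕ → Euc d) (hQbar0 : Qbar 0 = 0)
    (hQbar : ∀ k, 1 ≤ k → k ≤ N →
      cdMinus α ((b - a) / (N : ℝ)) Qbar k
        = (fderiv ℝ (fun x => f x (U k) (a + (k : ℝ) * ((b - a) / (N : ℝ)))) (SQ U k)) (Qbar k)
          + (fderiv ℝ (fun v => f (SQ U k) v (a + (k : ℝ) * ((b - a) / (N : ℝ)))) (U k)) (Ubar k)) :
    ∃ C ≥ (0 : ℝ), ∀ ε : ℝ, |ε| < 1 → ∀ k ≤ N,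
      ‖SQ (fun j => U j + ε • Ubar j) k - SQ U k - ε • Qbar k‖ ≤ C * ε ^ 2 := by
  set h : ℝ := (b - a) / (N : ℝ) with hhdef
  have hh : 0 < h := by
    apply div_pos (by linarith)
    exact_mod_cast Nat.pos_of_ne_zero (by omega)
  have hhα : 0 < h ^ α := Real.rpow_pos_of_pos hh α
  have hhalf : h ^ α * M ≤ 1 / 2 := by nlinarith
  have htmem : ∀ k : ℕ, k ≤ N → a + (k : ℝ) * h ∈ Set.Icc a b := by
    intro k hk
    constructor
    · nlinarith [mul_nonneg (Nat.cast_nonneg (α := ℝ) k) hh.le]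
    · have hkN : (k : ℝ) ≤ (N : ℝ) := by exact_mod_cast hk
      have hNh : (N : ℝ) * h = b - a := by
        rw [hhdef]; field_simp
      nlinarith
  -- `f` frozen in time is C²
  have hfg : ∀ t : ℝ, ContDiff ℝ 2 (fun q : Euc d × Euc m => f q.1 q.2 t) := by
    intro t
    exact hf.comp (contDiff_fst.prodMk (contDiff_snd.prodMk contDiff_const))
  -- decomposition of the full space derivative into partial derivatives
  have hDx : ∀ (x₀ : Euc d) (v₀ : Euc m) (t : ℝ) (u : Euc d) (w : Euc m),
      fderiv ℝ (fun q : Euc d × Euc m => f q.1 q.2 t) (x₀, v₀) (u, w)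
        = fderiv ℝ (fun x => f x v₀ t) x₀ u + fderiv ℝ (fun v => f x₀ v t) v₀ w := by
    intro x₀ v₀ t u w
    have hdg : HasFDerivAt (fun q : Euc d × Euc m => f q.1 q.2 t)
        (fderiv ℝ (fun q : Euc d × Euc m => f q.1 q.2 t) (x₀, v₀)) (x₀, v₀) :=
      (((hfg t).differentiable (by norm_num)) (x₀, v₀)).hasFDerivAt
    have h1 : HasFDerivAt (fun x : Euc d => f x v₀ t)
        ((fderiv ℝ (fun q : Euc d × Euc m => f q.1 q.2 t) (x₀, v₀)).comp
          (ContinuousLinearMap.inl ℝ (Euc d) (Euc m))) x₀ :=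
      HasFDerivAt.comp x₀ (f := fun e : Euc d => (e, v₀)) hdg (hasFDerivAt_prodMk_left x₀ v₀)
    have h2 : HasFDerivAt (fun v : Euc m => f x₀ v t)
        ((fderiv ℝ (fun q : Euc d × Euc m => f q.1 q.2 t) (x₀, v₀)).comp
          (ContinuousLinearMap.inr ℝ (Euc d) (Euc m))) v₀ :=
      HasFDerivAt.comp v₀ (f := fun e : Euc m => (x₀, e)) hdg (hasFDerivAt_prodMk_right x₀ v₀)
    rw [h1.fderiv, h2.fderiv]
    have huw : ((u, w) : Euc d × Euc m) = ((u, 0) : Euc d × Euc m) + (0, w) := by simp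
    rw [huw, map_add]
    simp [ContinuousLinearMap.comp_apply]
  -- norm bound on the partial derivative in `x`
  have hDxM : ∀ (v₀ : Euc m) (t : ℝ), t ∈ Set.Icc a b → ∀ x₀ : Euc d,
      ‖fderiv ℝ (fun x => f x v₀ t) x₀‖ ≤ M := by
    intro v₀ t ht x₀
    have hlw : LipschitzWith M.toNNReal (fun x => f x v₀ t) := by
      apply LipschitzWith.of_dist_le_mul
      intro x y
      rw [dist_eq_norm, dist_eq_norm, Real.coe_toNNReal M hM]
      exact hLip x y v₀ t ht
    have := norm_fderiv_le_of_lipschitz ℝ (x₀ := x₀) hlw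
    rwa [Real.coe_toNNReal M hM] at this
  -- first order stability, pointwise in k
  have claim1k : ∀ k, k ≤ N → ∃ C, 0 ≤ C ∧ ∀ ε : ℝ, |ε| < 1 →
      ‖SQ (fun j => U j + ε • Ubar j) k - SQ U k‖ ≤ C * |ε| := by
    intro k
    induction k using Nat.strong_induction_on with
    | _ k IH =>
    intro hkN
    rcases Nat.eq_zero_or_pos k with hk0 | hk1
    · subst hk0
      exact ⟨0, le_rfl, fun ε _ => by
        simp [(hSQ (fun j => U j + ε • Ubar j)).1, (hSQ U).1]⟩
    choose! Cf hCf0 hCf using fun j (hj : j < k) => IH j hj (le_trans hj.le hkN)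
    obtain ⟨Kψ, hKψ0, hKψ⟩ := taylor2 (fun s : ℝ => f (SQ U k) (U k + s • Ubar k) (a + (k:ℝ) * h))
      ((hfg (a + (k:ℝ) * h)).comp
        (contDiff_const.prodMk (contDiff_const.add (contDiff_id.smul contDiff_const)))) 0 1
    set Dψ := fderiv ℝ (fun s : ℝ => f (SQ U k) (U k + s • Ubar k) (a + (k:ℝ) * h)) 0 with hDψ
    set SC : ℝ := ∑ r ∈ Finset.range k, |glCoef α (r+1)| * Cf (k - (r+1)) with hSC
    have hSC0 : 0 ≤ SC := Finset.sum_nonneg fun r _ => mul_nonneg (abs_nonneg _)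
      (hCf0 _ (Nat.sub_lt hk1 r.succ_pos))
    refine ⟨2 * h ^ α * (‖Dψ‖ + Kψ) + 2 * SC, by positivity, fun ε hε => ?_⟩
    -- the fundamental identity for the difference
    have h30 : cdMinus α h (fun _ : ℕ => (0 : Euc d)) k = 0 := by
      simp [cdMinus, dMinus]
    have EE := key_combine hh ε ((hSQ (fun j => U j + ε • Ubar j)).2 k hk1 hkN)
      ((hSQ U).2 k hk1 hkN) h30 ((hSQ (fun j => U j + ε • Ubar j)).1.trans (hSQ U).1.symm) rfl
    simp only [smul_zero, sub_zero] at EE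
    have hnorm := norm_from_eq (Y := fun r => SQ (fun j => U j + ε • Ubar j) (k - (r+1)) - SQ U (k - (r+1))) EE
    -- bound the right-hand side
    have hψ : ‖f (SQ U k) (U k + ε • Ubar k) (a + (k:ℝ) * h) - f (SQ U k) (U k) (a + (k:ℝ) * h)‖
        ≤ (‖Dψ‖ + Kψ) * |ε| := by
      have hT := hKψ ε (by rw [Real.norm_eq_abs]; exact hε.le)
      simp only [zero_add, zero_smul, add_zero, Real.norm_eq_abs] at hT
      have htri : ‖f (SQ U k) (U k + ε • Ubar k) (a + (k:ℝ) * h) - f (SQ U k) (U k) (a + (k:ℝ) * h)‖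
          ≤ Kψ * |ε| ^ 2 + ‖Dψ ε‖ := by
        have h3 := norm_add_le (f (SQ U k) (U k + ε • Ubar k) (a + (k:ℝ) * h)
            - f (SQ U k) (U k) (a + (k:ℝ) * h) - Dψ ε) (Dψ ε)
        simp only [sub_add_cancel] at h3
        exact h3.trans (add_le_add hT le_rfl)
      refine htri.trans ?_
      have h1 : ‖Dψ ε‖ ≤ ‖Dψ‖ * |ε| := by
        have := Dψ.le_opNorm ε
        rwa [Real.norm_eq_abs] at this
      have h2 : |ε| ^ 2 ≤ |ε| := by nlinarith [abs_nonneg ε]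
      nlinarith [h1, h2, hKψ0, mul_le_mul_of_nonneg_left h2 hKψ0]
    have hLipT := hLip (SQ (fun j => U j + ε • Ubar j) k) (SQ U k) (U k + ε • Ubar k)
      (a + (k:ℝ) * h) (htmem k hkN)
    have hW : ‖f (SQ (fun j => U j + ε • Ubar j) k) ((fun j => U j + ε • Ubar j) k) (a + (k:ℝ) * h)
        - f (SQ U k) (U k) (a + (k:ℝ) * h)‖
        ≤ M * ‖SQ (fun j => U j + ε • Ubar j) k - SQ U k‖ + (‖Dψ‖ + Kψ) * |ε| := by
      have := norm_sub_le_norm_sub_add_norm_sub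
        (f (SQ (fun j => U j + ε • Ubar j) k) (U k + ε • Ubar k) (a + (k:ℝ) * h))
        (f (SQ U k) (U k + ε • Ubar k) (a + (k:ℝ) * h))
        (f (SQ U k) (U k) (a + (k:ℝ) * h))
      simp only [show ((fun j => U j + ε • Ubar j) k) = U k + ε • Ubar k from rfl]
      exact this.trans (add_le_add hLipT hψ)
    -- sum bound
    have hsum : ∑ r ∈ Finset.range k, |glCoef α (r+1)|
          * ‖SQ (fun j => U j + ε • Ubar j) (k - (r+1)) - SQ U (k - (r+1))‖ ≤ SC * |ε| := by
      rw [hSC, Finset.sum_mul]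
      refine Finset.sum_le_sum fun r _ => ?_
      rw [mul_assoc]
      exact mul_le_mul_of_nonneg_left
        (hCf _ (Nat.sub_lt hk1 r.succ_pos) ε hε) (abs_nonneg _)
    have hsmul : ‖(h ^ α : ℝ) • (f (SQ (fun j => U j + ε • Ubar j) k) ((fun j => U j + ε • Ubar j) k) (a + (k:ℝ) * h)
        - f (SQ U k) (U k) (a + (k:ℝ) * h))‖
        ≤ h ^ α * (M * ‖SQ (fun j => U j + ε • Ubar j) k - SQ U k‖ + (‖Dψ‖ + Kψ) * |ε|) := by
      rw [norm_smul, Real.norm_eq_abs, abs_of_pos hhα]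
      exact mul_le_mul_of_nonneg_left hW hhα.le
    have hkey : ‖SQ (fun j => U j + ε • Ubar j) k - SQ U k‖
        ≤ h ^ α * (M * ‖SQ (fun j => U j + ε • Ubar j) k - SQ U k‖ + (‖Dψ‖ + Kψ) * |ε|) + SC * |ε| :=
      hnorm.trans (add_le_add hsmul hsum)
    have habs : h ^ α * M * ‖SQ (fun j => U j + ε • Ubar j) k - SQ U k‖
        ≤ (1/2) * ‖SQ (fun j => U j + ε • Ubar j) k - SQ U k‖ :=
      mul_le_mul_of_nonneg_right hhalf (norm_nonneg _)
    nlinarith [norm_nonneg (SQ (fun j => U j + ε • Ubar j) k - SQ U k), abs_nonneg ε,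
      mul_nonneg hhα.le (mul_nonneg (by positivity : (0:ℝ) ≤ ‖Dψ‖ + Kψ) (abs_nonneg ε))]
  -- global first-order stability
  have claim1 : ∃ C1, 0 ≤ C1 ∧ ∀ ε : ℝ, |ε| < 1 → ∀ k ≤ N,
      ‖SQ (fun j => U j + ε • Ubar j) k - SQ U k‖ ≤ C1 * |ε| := by
    choose! Cf hCf0 hCf using claim1k
    refine ⟨∑ j ∈ Finset.range (N+1), Cf j,
      Finset.sum_nonneg fun j hj => hCf0 j (Nat.lt_succ_iff.mp (Finset.mem_range.mp hj)),
      fun ε hε k hk => ?_⟩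
    refine (hCf k hk ε hε).trans (mul_le_mul_of_nonneg_right ?_ (abs_nonneg ε))
    exact Finset.single_le_sum
      (fun j hj => hCf0 j (Nat.lt_succ_iff.mp (Finset.mem_range.mp hj)))
      (Finset.mem_range.mpr (Nat.lt_succ_of_le hk))
  obtain ⟨C1, hC10, hC1⟩ := claim1
  -- second order stability, pointwise in k
  have claim2k : ∀ k, k ≤ N → ∃ C, 0 ≤ C ∧ ∀ ε : ℝ, |ε| < 1 →
      ‖SQ (fun j => U j + ε • Ubar j) k - SQ U k - ε • Qbar k‖ ≤ C * ε ^ 2 := by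
    intro k
    induction k using Nat.strong_induction_on with
    | _ k IH =>
    intro hkN
    rcases Nat.eq_zero_or_pos k with hk0 | hk1
    · subst hk0
      exact ⟨0, le_rfl, fun ε _ => by
        simp [(hSQ (fun j => U j + ε • Ubar j)).1, (hSQ U).1, hQbar0]⟩
    choose! Cf hCf0 hCf using fun j (hj : j < k) => IH j hj (le_trans hj.le hkN)
    have hρ0 : 0 ≤ C1 + ‖Ubar k‖ := add_nonneg hC10 (norm_nonneg _)
    obtain ⟨K2, hK20, hK2⟩ := taylor2 (fun q : Euc d × Euc m => f q.1 q.2 (a + (k:ℝ) * h))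
      (hfg (a + (k:ℝ) * h)) ((SQ U k, U k) : Euc d × Euc m) (C1 + ‖Ubar k‖)
    set SC : ℝ := ∑ r ∈ Finset.range k, |glCoef α (r+1)| * Cf (k - (r+1)) with hSCdef
    have hSC0 : 0 ≤ SC := Finset.sum_nonneg fun r _ => mul_nonneg (abs_nonneg _)
      (hCf0 _ (Nat.sub_lt hk1 r.succ_pos))
    refine ⟨2 * h ^ α * (K2 * (C1 + ‖Ubar k‖) ^ 2) + 2 * SC,
      by nlinarith [mul_nonneg hhα.le (mul_nonneg hK20 (sq_nonneg (C1 + ‖Ubar k‖))), hSC0],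
      fun ε hε => ?_⟩
    have EE := key_combine hh ε ((hSQ (fun j => U j + ε • Ubar j)).2 k hk1 hkN)
      ((hSQ U).2 k hk1 hkN) (hQbar k hk1 hkN)
      ((hSQ (fun j => U j + ε • Ubar j)).1.trans (hSQ U).1.symm) hQbar0
    have hnorm := norm_from_eq
      (Y := fun r => SQ (fun j => U j + ε • Ubar j) (k - (r+1)) - SQ U (k - (r+1))
        - ε • Qbar (k - (r+1))) EE
    -- Taylor expansion of the right-hand side
    set u : Euc d × Euc m := (SQ (fun j => U j + ε • Ubar j) k - SQ U k, ε • Ubar k) with hu_def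
    have hu1 : ‖SQ (fun j => U j + ε • Ubar j) k - SQ U k‖ ≤ (C1 + ‖Ubar k‖) * |ε| := by
      refine (hC1 ε hε k hkN).trans ?_
      nlinarith [abs_nonneg ε, norm_nonneg (Ubar k)]
    have hu2 : ‖ε • Ubar k‖ ≤ (C1 + ‖Ubar k‖) * |ε| := by
      rw [norm_smul, Real.norm_eq_abs]
      nlinarith [abs_nonneg ε, norm_nonneg (Ubar k)]
    have hu : ‖u‖ ≤ (C1 + ‖Ubar k‖) * |ε| := by
      rw [Prod.norm_def]
      exact max_le hu1 hu2
    have huρ : ‖u‖ ≤ C1 + ‖Ubar k‖ := hu.trans (by nlinarith [abs_nonneg ε])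
    have hT := hK2 u huρ
    have hp : ((SQ U k, U k) : Euc d × Euc m) + u
        = (SQ (fun j => U j + ε • Ubar j) k, U k + ε • Ubar k) := by
      rw [hu_def, Prod.mk_add_mk, add_sub_cancel]
    rw [hp] at hT
    have hT' : ‖f (SQ (fun j => U j + ε • Ubar j) k) (U k + ε • Ubar k) (a + (k:ℝ) * h)
        - f (SQ U k) (U k) (a + (k:ℝ) * h)
        - fderiv ℝ (fun q : Euc d × Euc m => f q.1 q.2 (a + (k:ℝ) * h)) (SQ U k, U k) u‖
        ≤ K2 * ‖u‖ ^ 2 := hT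
    have hDgu : fderiv ℝ (fun q : Euc d × Euc m => f q.1 q.2 (a + (k:ℝ) * h)) (SQ U k, U k) u
        = fderiv ℝ (fun x => f x (U k) (a + (k:ℝ) * h)) (SQ U k)
            (SQ (fun j => U j + ε • Ubar j) k - SQ U k)
          + fderiv ℝ (fun v => f (SQ U k) v (a + (k:ℝ) * h)) (U k) (ε • Ubar k) :=
      hDx (SQ U k) (U k) (a + (k:ℝ) * h) _ _
    have hWsplit : f (SQ (fun j => U j + ε • Ubar j) k) (U k + ε • Ubar k) (a + (k:ℝ) * h)
          - f (SQ U k) (U k) (a + (k:ℝ) * h)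
          - ε • (fderiv ℝ (fun x => f x (U k) (a + (k:ℝ) * h)) (SQ U k) (Qbar k)
            + fderiv ℝ (fun v => f (SQ U k) v (a + (k:ℝ) * h)) (U k) (Ubar k))
        = (f (SQ (fun j => U j + ε • Ubar j) k) (U k + ε • Ubar k) (a + (k:ℝ) * h)
          - f (SQ U k) (U k) (a + (k:ℝ) * h)
          - fderiv ℝ (fun q : Euc d × Euc m => f q.1 q.2 (a + (k:ℝ) * h)) (SQ U k, U k) u)
          + fderiv ℝ (fun x => f x (U k) (a + (k:ℝ) * h)) (SQ U k)
            (SQ (fun j => U j + ε • Ubar j) k - SQ U k - ε • Qbar k) := by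
      rw [hDgu]
      simp only [map_sub, map_smul, smul_add]
      abel
    have hDxR : ‖fderiv ℝ (fun x => f x (U k) (a + (k:ℝ) * h)) (SQ U k)
          (SQ (fun j => U j + ε • Ubar j) k - SQ U k - ε • Qbar k)‖
        ≤ M * ‖SQ (fun j => U j + ε • Ubar j) k - SQ U k - ε • Qbar k‖ := by
      refine ((fderiv ℝ (fun x => f x (U k) (a + (k:ℝ) * h)) (SQ U k)).le_opNorm _).trans ?_
      exact mul_le_mul_of_nonneg_right (hDxM (U k) _ (htmem k hkN) (SQ U k)) (norm_nonneg _)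
    have hu2sq : ‖u‖ ^ 2 ≤ (C1 + ‖Ubar k‖) ^ 2 * ε ^ 2 := by
      have := sq_abs ε
      nlinarith [norm_nonneg u, abs_nonneg ε]
    have hW : ‖f (SQ (fun j => U j + ε • Ubar j) k) ((fun j => U j + ε • Ubar j) k) (a + (k:ℝ) * h)
          - f (SQ U k) (U k) (a + (k:ℝ) * h)
          - ε • (fderiv ℝ (fun x => f x (U k) (a + (k:ℝ) * h)) (SQ U k) (Qbar k)
            + fderiv ℝ (fun v => f (SQ U k) v (a + (k:ℝ) * h)) (U k) (Ubar k))‖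
        ≤ K2 * (C1 + ‖Ubar k‖) ^ 2 * ε ^ 2
          + M * ‖SQ (fun j => U j + ε • Ubar j) k - SQ U k - ε • Qbar k‖ := by
      have hfe : ((fun j => U j + ε • Ubar j) k) = U k + ε • Ubar k := rfl
      rw [hfe, hWsplit]
      refine (norm_add_le _ _).trans (add_le_add (hT'.trans ?_) hDxR)
      nlinarith [hu2sq, hK20]
    have hsum : ∑ r ∈ Finset.range k, |glCoef α (r+1)|
          * ‖SQ (fun j => U j + ε • Ubar j) (k - (r+1)) - SQ U (k - (r+1))
            - ε • Qbar (k - (r+1))‖ ≤ SC * ε ^ 2 := by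
      rw [hSCdef, Finset.sum_mul]
      refine Finset.sum_le_sum fun r _ => ?_
      rw [mul_assoc]
      exact mul_le_mul_of_nonneg_left (hCf _ (Nat.sub_lt hk1 r.succ_pos) ε hε) (abs_nonneg _)
    have hsmul : ‖(h ^ α : ℝ) • (f (SQ (fun j => U j + ε • Ubar j) k)
          ((fun j => U j + ε • Ubar j) k) (a + (k:ℝ) * h)
          - f (SQ U k) (U k) (a + (k:ℝ) * h)
          - ε • (fderiv ℝ (fun x => f x (U k) (a + (k:ℝ) * h)) (SQ U k) (Qbar k)
            + fderiv ℝ (fun v => f (SQ U k) v (a + (k:ℝ) * h)) (U k) (Ubar k)))‖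
        ≤ h ^ α * (K2 * (C1 + ‖Ubar k‖) ^ 2 * ε ^ 2
          + M * ‖SQ (fun j => U j + ε • Ubar j) k - SQ U k - ε • Qbar k‖) := by
      rw [norm_smul, Real.norm_eq_abs, abs_of_pos hhα]
      exact mul_le_mul_of_nonneg_left hW hhα.le
    have hkey : ‖SQ (fun j => U j + ε • Ubar j) k - SQ U k - ε • Qbar k‖
        ≤ h ^ α * (K2 * (C1 + ‖Ubar k‖) ^ 2 * ε ^ 2
          + M * ‖SQ (fun j => U j + ε • Ubar j) k - SQ U k - ε • Qbar k‖) + SC * ε ^ 2 :=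
      hnorm.trans (add_le_add hsmul hsum)
    have habs : h ^ α * M * ‖SQ (fun j => U j + ε • Ubar j) k - SQ U k - ε • Qbar k‖
        ≤ (1/2) * ‖SQ (fun j => U j + ε • Ubar j) k - SQ U k - ε • Qbar k‖ :=
      mul_le_mul_of_nonneg_right hhalf (norm_nonneg _)
    exact absorb_ineq hkey habs
  -- assemble
  choose! Cg hCg0 hCg using claim2k
  refine ⟨∑ j ∈ Finset.range (N+1), Cg j,
    Finset.sum_nonneg fun j hj => hCg0 j (Nat.lt_succ_iff.mp (Finset.mem_range.mp hj)),
    fun ε hε k hk => ?_⟩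
  refine (hCg k hk ε hε).trans (mul_le_mul_of_nonneg_right ?_ (sq_nonneg ε))
  exact Finset.single_le_sum
    (fun j hj => hCg0 j (Nat.lt_succ_iff.mp (Finset.mem_range.mp hj)))
    (Finset.mem_range.mpr (Nat.lt_succ_of_le hk))
end
end

section
/- Gâteaux derivative of the discrete cost functional: Let U, Ū ∈ (ℝ^m)^{N+1}, and let Q̄ ∈ (ℝ^d)^{N+1} be the unique sequence with Q̄_0 = 0 and (ᶜΔ^α_− Q̄)_k = ∂f/∂x(Q^{U}_k, U_k, t_k) Q̄_k + ∂f/∂v(Q^{U}_k, U_k, t_k) Ū_k for k = 1,…,N. Then the limit DL^α_h(U)(Ū) = lim_{ε→0} (L^α_h(U+εŪ) − L^α_h(U))/ε exists and equals h ∑_{k=1}^{N} [ ∂L/∂x(Q^{U}_k, U_k, t_k) · Q̄_k + ∂L/∂v(Q^{U}_k, U_k, t_k) · Ū_k ]. -/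
open Finset Filter
open scoped RealInnerProductSpace Topology

noncomputable section

set_option maxHeartbeats 1600000 in
theorem hasDerivAt_comp_curve {d m : ℕ} {E : Type*} [NormedAddCommGroup E] [NormedSpace ℝ E]
    (f : Euc d → Euc m → ℝ → E)
    (hf : ContDiff ℝ 2 fun p : Euc d × Euc m × ℝ => f p.1 p.2.1 p.2.2)
    (X : ℝ → Euc d) (W : ℝ → Euc m) (t : ℝ) (X' : Euc d) (W' : Euc m)
    (hX : HasDerivAt X X' 0) (hW : HasDerivAt W W' 0) :
    HasDerivAt (fun ε : ℝ => f (X ε) (W ε) t)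
      ((fderiv ℝ (fun y => f y (W 0) t) (X 0)) X'
        + (fderiv ℝ (fun w => f (X 0) w t) (W 0)) W') 0 := by
  set F : Euc d × Euc m × ℝ → E := fun p => f p.1 p.2.1 p.2.2 with hF
  have hFd : Differentiable ℝ F := hf.differentiable (by norm_num)
  have hDF : HasFDerivAt F (fderiv ℝ F (X 0, W 0, t)) (X 0, W 0, t) := (hFd _).hasFDerivAt
  have hγ : HasDerivAt (fun ε : ℝ => ((X ε, W ε, t) : Euc d × Euc m × ℝ)) ((X', W', 0)) 0 :=
    hX.prodMk (hW.prodMk (hasDerivAt_const _ _))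
  have hcomp := hDF.comp_hasDerivAt 0 hγ
  have hx : HasFDerivAt (fun y : Euc d => f y (W 0) t)
      ((fderiv ℝ F (X 0, W 0, t)).comp ((ContinuousLinearMap.id ℝ (Euc d)).prod 0)) (X 0) :=
    HasFDerivAt.comp (f := fun y : Euc d => ((y, W 0, t) : Euc d × Euc m × ℝ)) (X 0) hDF ((hasFDerivAt_id _).prodMk (hasFDerivAt_const (W 0, t) _))
  have hv : HasFDerivAt (fun w : Euc m => f (X 0) w t)
      ((fderiv ℝ F (X 0, W 0, t)).comp
        ((0 : Euc m →L[ℝ] Euc d).prod ((ContinuousLinearMap.id ℝ (Euc m)).prod 0))) (W 0) :=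
    HasFDerivAt.comp (f := fun w : Euc m => ((X 0, w, t) : Euc d × Euc m × ℝ)) (W 0) hDF ((hasFDerivAt_const (X 0) _).prodMk ((hasFDerivAt_id _).prodMk (hasFDerivAt_const t _)))
  have ex : (fderiv ℝ (fun y => f y (W 0) t) (X 0)) X'
      = fderiv ℝ F (X 0, W 0, t) (X', 0, 0) := by rw [hx.fderiv]; rfl
  have ev : (fderiv ℝ (fun w => f (X 0) w t) (W 0)) W'
      = fderiv ℝ F (X 0, W 0, t) (0, W', 0) := by rw [hv.fderiv]; rfl
  have hsplit : fderiv ℝ F (X 0, W 0, t) (X', W', 0)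
      = fderiv ℝ F (X 0, W 0, t) (X', 0, 0) + fderiv ℝ F (X 0, W 0, t) (0, W', 0) := by
    rw [← ContinuousLinearMap.map_add]; norm_num
  rw [ex, ev, ← hsplit]
  exact hcomp


set_option maxHeartbeats 1600000 in
/-- **Gâteaux derivative of the discrete cost functional.** -/
theorem gateaux_derivative_discrete_cost
    (d m N : ℕ) (hd : 1 ≤ d) (hm : 1 ≤ m) (hN : 1 ≤ N)
    (a b : ℝ) (hab : a < b) (α : ℝ) (hα : 0 < α) (hα1 : α ≤ 1)
    (A : Euc d)
    (f : Euc d → Euc m → ℝ → Euc d)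
    (hf : ContDiff ℝ 2 fun p : Euc d × Euc m × ℝ => f p.1 p.2.1 p.2.2)
    (L : Euc d → Euc m → ℝ → ℝ)
    (hL : ContDiff ℝ 2 fun p : Euc d × Euc m × ℝ => L p.1 p.2.1 p.2.2)
    (M : ℝ) (hM : 0 ≤ M)
    (hLip : ∀ (x₁ x₂ : Euc d) (v : Euc m), ∀ t ∈ Set.Icc a b,
      ‖f x₁ v t - f x₂ v t‖ ≤ M * ‖x₁ - x₂‖)
    (hMsmall : 2 * ((b - a) / (N : ℝ)) ^ α * M < 1)
    -- `SQ V` is the discrete state variable associated to the discrete control `V`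
    (SQ : (ℕ → Euc m) → ℕ → Euc d)
    (hSQ : ∀ V : ℕ → Euc m, SQ V 0 = A ∧ ∀ k, 1 ≤ k → k ≤ N →
      cdMinus α ((b - a) / (N : ℝ)) (SQ V) k
        = f (SQ V k) (V k) (a + (k : ℝ) * ((b - a) / (N : ℝ))))
    (U Ubar : ℕ → Euc m)
    -- `Qbar` is the solution of the linearised discrete fractional Cauchy problem
    (Qbar : ℕ → Euc d) (hQbar0 : Qbar 0 = 0)
    (hQbar : ∀ k, 1 ≤ k → k ≤ N →
      cdMinus α ((b - a) / (N : ℝ)) Qbar k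
        = (fderiv ℝ (fun x => f x (U k) (a + (k : ℝ) * ((b - a) / (N : ℝ)))) (SQ U k)) (Qbar k)
          + (fderiv ℝ (fun v => f (SQ U k) v (a + (k : ℝ) * ((b - a) / (N : ℝ)))) (U k)) (Ubar k)) :
    Filter.Tendsto
      (fun ε : ℝ =>
        ((((b - a) / (N : ℝ)) * ∑ k ∈ Finset.Icc 1 N,
            L (SQ (fun j => U j + ε • Ubar j) k) (U k + ε • Ubar k)
              (a + (k : ℝ) * ((b - a) / (N : ℝ)))) -
          ((b - a) / (N : ℝ)) * ∑ k ∈ Finset.Icc 1 N,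
            L (SQ U k) (U k) (a + (k : ℝ) * ((b - a) / (N : ℝ)))) / ε)
      (𝓝[≠] (0 : ℝ))
      (𝓝 (((b - a) / (N : ℝ)) * ∑ k ∈ Finset.Icc 1 N,
        ((fderiv ℝ (fun x => L x (U k) (a + (k : ℝ) * ((b - a) / (N : ℝ)))) (SQ U k)) (Qbar k)
          + (fderiv ℝ (fun v => L (SQ U k) v (a + (k : ℝ) * ((b - a) / (N : ℝ)))) (U k)) (Ubar k)))) := by
  classical
  have hNpos : (0:ℝ) < (N:ℝ) := by exact_mod_cast Nat.pos_of_ne_zero (by omega)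
  set hstep : ℝ := (b - a) / (N : ℝ) with hhs
  have hpos : 0 < hstep := div_pos (by linarith) hNpos
  set P : ℝ := hstep ^ α with hPdef
  have hPpos : 0 < P := Real.rpow_pos_of_pos hpos α
  have hPM : P * M ≤ 1/2 := by nlinarith
  have htmem : ∀ k : ℕ, 1 ≤ k → k ≤ N → (a + (k:ℝ) * hstep) ∈ Set.Icc a b := by
    intro k h1 h2
    have hk : (0:ℝ) ≤ (k:ℝ) := Nat.cast_nonneg k
    have hkN : (k:ℝ) ≤ (N:ℝ) := by exact_mod_cast h2
    have hNh : (N:ℝ) * hstep = b - a := by rw [hhs]; field_simp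
    constructor
    · nlinarith
    · nlinarith
  have hglCoef0 : glCoef α 0 = 1 := by simp [glCoef]
  have hU0 : (fun j => U j + (0:ℝ) • Ubar j) = U := by funext j; simp
  have hmul : P * hstep ^ (-α) = 1 := by
    rw [hPdef, ← Real.rpow_add hpos]; simp
  have key : ∀ (W : ℕ → Euc m) (k : ℕ), 1 ≤ k → k ≤ N →
      ∑ r ∈ Finset.range (k+1), glCoef α r • (SQ W (k - r) - A)
        = P • f (SQ W k) (W k) (a + (k:ℝ) * hstep) := by
    intro W k hk1 hkN
    have h0 := (hSQ W).1
    have heq := (hSQ W).2 k hk1 hkN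
    simp only [cdMinus, dMinus, h0] at heq
    have := congrArg (fun y => P • y) heq
    simp only [smul_smul, hmul, one_smul] at this
    exact this
  have keyQ : ∀ k : ℕ, 1 ≤ k → k ≤ N →
      ∑ r ∈ Finset.range (k+1), glCoef α r • Qbar (k - r)
        = P • ((fderiv ℝ (fun x => f x (U k) (a + (k:ℝ)*hstep)) (SQ U k)) (Qbar k)
             + (fderiv ℝ (fun v => f (SQ U k) v (a + (k:ℝ)*hstep)) (U k)) (Ubar k)) := by
    intro k hk1 hkN
    have heq := hQbar k hk1 hkN
    simp only [cdMinus, dMinus, hQbar0, sub_zero] at heq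
    have := congrArg (fun y => P • y) heq
    simp only [smul_smul, hmul, one_smul] at this
    exact this
  have main : ∀ k, k ≤ N →
      (fun ε : ℝ => SQ (fun j => U j + ε • Ubar j) k - SQ U k - ε • Qbar k)
        =o[𝓝 (0:ℝ)] (fun ε : ℝ => ε) := by
    intro k
    induction k using Nat.strong_induction_on with
    | _ k IH =>
      intro hkN
      rcases Nat.eq_zero_or_pos k with rfl | hk1
      · have hz : ∀ ε : ℝ, SQ (fun j => U j + ε • Ubar j) 0 - SQ U 0 - ε • Qbar 0 = 0 := by
          intro ε
          rw [(hSQ _).1, (hSQ U).1, hQbar0]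
          simp
        simp only [hz]
        exact Asymptotics.isLittleO_zero _ _
      · -- k ≥ 1
        set e : ℕ → ℝ → Euc d :=
          fun j ε => SQ (fun i => U i + ε • Ubar i) j - SQ U j - ε • Qbar j with he
        set Dx := fderiv ℝ (fun x => f x (U k) (a + (k:ℝ)*hstep)) (SQ U k) with hDxd
        set Dv := fderiv ℝ (fun v => f (SQ U k) v (a + (k:ℝ)*hstep)) (U k) with hDvd
        set S : ℝ → Euc d :=
          fun ε => ∑ r ∈ Finset.range k, glCoef α (r+1) • e (k - (r+1)) ε with hSdef
        set T2 : ℝ → Euc d := fun ε =>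
          f (SQ U k + ε • Qbar k) (U k + ε • Ubar k) (a + (k:ℝ)*hstep)
            - f (SQ U k) (U k) (a + (k:ℝ)*hstep)
            - ε • (Dx (Qbar k) + Dv (Ubar k)) with hT2def
        have hid : ∀ ε : ℝ, e k ε = -S ε
            + P • (f (SQ (fun i => U i + ε • Ubar i) k) (U k + ε • Ubar k) (a + (k:ℝ)*hstep)
                   - f (SQ U k + ε • Qbar k) (U k + ε • Ubar k) (a + (k:ℝ)*hstep))
            + P • T2 ε := by
          intro ε
          have A1 := key (fun i => U i + ε • Ubar i) k hk1 hkN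
          have A2 := key U k hk1 hkN
          have A3 := keyQ k hk1 hkN
          have hsum : ∑ r ∈ Finset.range (k+1), glCoef α r • e (k - r) ε
              = P • f (SQ (fun i => U i + ε • Ubar i) k) (U k + ε • Ubar k) (a + (k:ℝ)*hstep)
                - P • f (SQ U k) (U k) (a + (k:ℝ)*hstep)
                - ε • (P • (Dx (Qbar k) + Dv (Ubar k))) := by
            have hterm : ∀ r ∈ Finset.range (k+1), glCoef α r • e (k - r) ε
                = glCoef α r • (SQ (fun i => U i + ε • Ubar i) (k - r) - A)
                  - glCoef α r • (SQ U (k - r) - A)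
                  - ε • (glCoef α r • Qbar (k - r)) := by
              intro r _
              simp only [he]
              module
            rw [Finset.sum_congr rfl hterm, Finset.sum_sub_distrib, Finset.sum_sub_distrib,
              ← Finset.smul_sum, A1, A2, A3]
          rw [Finset.sum_range_succ'] at hsum
          have h00 : glCoef α 0 • e (k - 0) ε = e k ε := by
            simp [hglCoef0]
          rw [h00] at hsum
          have hek := eq_sub_of_add_eq' hsum
          rw [hek]
          simp only [hSdef, hT2def]
          module
        have hT1bound : ∀ ε : ℝ,
            ‖f (SQ (fun i => U i + ε • Ubar i) k) (U k + ε • Ubar k) (a + (k:ℝ)*hstep)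
              - f (SQ U k + ε • Qbar k) (U k + ε • Ubar k) (a + (k:ℝ)*hstep)‖ ≤ M * ‖e k ε‖ := by
          intro ε
          have hlip := hLip (SQ (fun i => U i + ε • Ubar i) k) (SQ U k + ε • Qbar k)
            (U k + ε • Ubar k) (a + (k:ℝ)*hstep) (htmem k hk1 hkN)
          have harg : SQ (fun i => U i + ε • Ubar i) k - (SQ U k + ε • Qbar k) = e k ε := by
            simp only [he]
            abel
          rwa [harg] at hlip
        have hSo : S =o[𝓝 (0:ℝ)] (fun ε : ℝ => ε) := by
          rw [hSdef]
          refine Asymptotics.IsLittleO.fun_sum ?_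
          intro r _
          have hr1 : k - (r+1) < k := Nat.sub_lt hk1 (Nat.succ_pos r)
          have hr2 : k - (r+1) ≤ N := le_trans (Nat.sub_le k _) hkN
          exact (IH _ hr1 hr2).const_smul_left (glCoef α (r+1))
        have hXc : HasDerivAt (fun ε : ℝ => SQ U k + ε • Qbar k) (Qbar k) 0 := by
          simpa using ((hasDerivAt_id (0:ℝ)).smul_const (Qbar k)).const_add (SQ U k)
        have hWc : HasDerivAt (fun ε : ℝ => U k + ε • Ubar k) (Ubar k) 0 := by
          simpa using ((hasDerivAt_id (0:ℝ)).smul_const (Ubar k)).const_add (U k)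
        have hψ : HasDerivAt
            (fun ε : ℝ => f (SQ U k + ε • Qbar k) (U k + ε • Ubar k) (a + (k:ℝ)*hstep))
            (Dx (Qbar k) + Dv (Ubar k)) 0 := by
          have hc := hasDerivAt_comp_curve f hf (fun ε : ℝ => SQ U k + ε • Qbar k)
            (fun ε : ℝ => U k + ε • Ubar k) (a + (k:ℝ)*hstep) (Qbar k) (Ubar k) hXc hWc
          simpa [hDxd, hDvd] using hc
        have hT2o : T2 =o[𝓝 (0:ℝ)] (fun ε : ℝ => ε) := by
          have h1 := hasDerivAt_iff_isLittleO.mp hψ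
          rw [hT2def]
          simpa using h1
        have hEo : (fun ε : ℝ => ‖S ε‖ + P * ‖T2 ε‖) =o[𝓝 (0:ℝ)] (fun ε : ℝ => ε) :=
          hSo.norm_left.add (hT2o.norm_left.const_mul_left P)
        have hbound : ∀ ε : ℝ, ‖e k ε‖ ≤ 2 * ‖‖S ε‖ + P * ‖T2 ε‖‖ := by
          intro ε
          have h2 : ‖e k ε‖ ≤ ‖S ε‖ + P * (M * ‖e k ε‖) + P * ‖T2 ε‖ := by
            calc ‖e k ε‖ = ‖-S ε
                + P • (f (SQ (fun i => U i + ε • Ubar i) k) (U k + ε • Ubar k) (a + (k:ℝ)*hstep)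
                       - f (SQ U k + ε • Qbar k) (U k + ε • Ubar k) (a + (k:ℝ)*hstep))
                + P • T2 ε‖ := by rw [hid ε]
              _ ≤ ‖-S ε‖
                  + ‖P • (f (SQ (fun i => U i + ε • Ubar i) k) (U k + ε • Ubar k) (a + (k:ℝ)*hstep)
                       - f (SQ U k + ε • Qbar k) (U k + ε • Ubar k) (a + (k:ℝ)*hstep))‖
                  + ‖P • T2 ε‖ := norm_add₃_le
              _ = ‖S ε‖
                  + P * ‖f (SQ (fun i => U i + ε • Ubar i) k) (U k + ε • Ubar k) (a + (k:ℝ)*hstep)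
                       - f (SQ U k + ε • Qbar k) (U k + ε • Ubar k) (a + (k:ℝ)*hstep)‖
                  + P * ‖T2 ε‖ := by
                    rw [norm_neg, norm_smul, norm_smul, Real.norm_of_nonneg hPpos.le]
              _ ≤ ‖S ε‖ + P * (M * ‖e k ε‖) + P * ‖T2 ε‖ := by
                    have := hT1bound ε
                    gcongr
          have hnn : 0 ≤ ‖S ε‖ + P * ‖T2 ε‖ := by positivity
          rw [Real.norm_of_nonneg hnn]
          nlinarith [norm_nonneg (e k ε), norm_nonneg (S ε), norm_nonneg (T2 ε)]
        exact (Asymptotics.IsBigO.of_bound 2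
          (Filter.Eventually.of_forall hbound)).trans_isLittleO hEo
  have hg : ∀ k, k ≤ N →
      HasDerivAt (fun ε : ℝ => SQ (fun j => U j + ε • Ubar j) k) (Qbar k) 0 := by
    intro k hk
    rw [hasDerivAt_iff_isLittleO]
    have hm := main k hk
    simpa [hU0] using hm
  have hLk : ∀ k ∈ Finset.Icc 1 N, HasDerivAt
      (fun ε : ℝ => L (SQ (fun j => U j + ε • Ubar j) k) (U k + ε • Ubar k) (a + (k:ℝ) * hstep))
      ((fderiv ℝ (fun x => L x (U k) (a + (k:ℝ)*hstep)) (SQ U k)) (Qbar k)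
        + (fderiv ℝ (fun v => L (SQ U k) v (a + (k:ℝ)*hstep)) (U k)) (Ubar k)) 0 := by
    intro k hk
    simp only [Finset.mem_Icc] at hk
    have hgk := hg k hk.2
    have hWc : HasDerivAt (fun ε : ℝ => U k + ε • Ubar k) (Ubar k) 0 := by
      simpa using ((hasDerivAt_id (0:ℝ)).smul_const (Ubar k)).const_add (U k)
    have hc := hasDerivAt_comp_curve L hL (fun ε : ℝ => SQ (fun j => U j + ε • Ubar j) k)
      (fun ε : ℝ => U k + ε • Ubar k) (a + (k:ℝ)*hstep) (Qbar k) (Ubar k) hgk hWc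
    simpa [hU0] using hc
  have hF : HasDerivAt (fun ε : ℝ => hstep * ∑ k ∈ Finset.Icc 1 N,
      L (SQ (fun j => U j + ε • Ubar j) k) (U k + ε • Ubar k) (a + (k:ℝ)*hstep))
      (hstep * ∑ k ∈ Finset.Icc 1 N,
        ((fderiv ℝ (fun x => L x (U k) (a + (k:ℝ)*hstep)) (SQ U k)) (Qbar k)
          + (fderiv ℝ (fun v => L (SQ U k) v (a + (k:ℝ)*hstep)) (U k)) (Ubar k))) 0 :=
    (HasDerivAt.fun_sum hLk).const_mul hstep
  rw [hasDerivAt_iff_tendsto_slope] at hF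
  refine Filter.Tendsto.congr (fun ε => ?_) hF
  rw [slope_def_field]
  simp [hU0]
end
end

section
/- Link with the discrete fractional Euler–Lagrange equation: Take m = d and f(x,v,t) = v. If (Q,U,P) ∈ (ℝ^d)^{N+1} × (ℝ^d)^{N+1} × (ℝ^d)^{N+1} solves the shifted discrete fractional Pontryagin system (σPS), then Q solves the discrete fractional Euler–Lagrange equation: for every k = 0,…,N−1, ∂L/∂x(Q_{k+1}, (ᶜΔ^α_− Q)_{k+1}, t_{k+1}) + (Δ^α_+ W)_k = 0, where W ∈ (ℝ^d)^{N+1} is defined by W_j = ∂L/∂v(Q_{j+1}, (ᶜΔ^α_− Q)_{j+1}, t_{j+1}) for j = 0,…,N−1 and W_N = 0. -/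
open Finset Filter
open scoped RealInnerProductSpace Topology

noncomputable section

/-- The shifted discrete fractional Pontryagin system `(σPS)` associated to the Hamiltonian `H`:
`Q_0 = A`, `P_N = 0`, `(ᶜΔ^α_− Q)_k = ∂H/∂w(Q_k, U_k, P_{k−1}, t_k)` for `k = 1,…,N`,
`(Δ^α_+ P)_k = ∂H/∂x(Q_{k+1}, U_{k+1}, P_k, t_{k+1})` for `k = 0,…,N−1`, and
`∂H/∂v(Q_k, U_k, P_{k−1}, t_k) = 0` for `k = 1,…,N`. -/
def SigmaPS {d m : ℕ} (N : ℕ) (α hstep a : ℝ) (A : Euc d)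
    (H : Euc d → Euc m → Euc d → ℝ → ℝ)
    (Q : ℕ → Euc d) (U : ℕ → Euc m) (P : ℕ → Euc d) : Prop :=
  Q 0 = A ∧ P N = 0 ∧
  (∀ k, 1 ≤ k → k ≤ N →
    cdMinus α hstep Q k
      = gradient (fun w => H (Q k) (U k) w (a + (k : ℝ) * hstep)) (P (k - 1))) ∧
  (∀ k, k < N →
    dPlus N α hstep P k
      = gradient (fun x => H x (U (k + 1)) (P k) (a + ((k : ℝ) + 1) * hstep)) (Q (k + 1))) ∧
  (∀ k, 1 ≤ k → k ≤ N →
    gradient (fun v => H (Q k) v (P (k - 1)) (a + (k : ℝ) * hstep)) (U k) = 0)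

lemma hasGradientAt_inner_right {n : ℕ} (v p : Euc n) :
    HasGradientAt (fun w => ⟪w, v⟫) v p := by
  rw [hasGradientAt_iff_hasFDerivAt]
  have h := (InnerProductSpace.toDual ℝ (Euc n) v).hasFDerivAt (x := p)
  refine h.congr_of_eventuallyEq (Filter.Eventually.of_forall fun w => ?_)
  simp [InnerProductSpace.toDual_apply_apply, real_inner_comm]

lemma hasGradientAt_inner_left {n : ℕ} (w u : Euc n) :
    HasGradientAt (fun y => ⟪w, y⟫) w u := by
  have he : (fun y : Euc n => ⟪w, y⟫) = fun y => ⟪y, w⟫ :=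
    funext fun y => real_inner_comm _ _
  rw [he]
  exact hasGradientAt_inner_right w u

lemma HasGradientAt.add'' {n : ℕ} {f g : Euc n → ℝ} {f' g' x : Euc n}
    (hf : HasGradientAt f f' x) (hg : HasGradientAt g g' x) :
    HasGradientAt (fun y => f y + g y) (f' + g') x := by
  rw [hasGradientAt_iff_hasFDerivAt] at *
  rw [map_add]; exact hf.add hg

lemma gradient_const_add_inner {n : ℕ} (c : ℝ) (v p : Euc n) :
    gradient (fun w => c + ⟪w, v⟫) p = v := by
  have h : HasGradientAt (fun w : Euc n => c + ⟪w, v⟫) (0 + v) p := by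
    refine HasGradientAt.add'' ?_ (hasGradientAt_inner_right v p)
    rw [hasGradientAt_iff_hasFDerivAt]
    simpa using hasFDerivAt_const c p
  simpa using h.gradient

lemma gradient_add_inner {n : ℕ} {g : Euc n → ℝ} {u : Euc n}
    (hg : DifferentiableAt ℝ g u) (w : Euc n) :
    gradient (fun v => g v + ⟪w, v⟫) u = gradient g u + w :=
  (hg.hasGradientAt.add'' (hasGradientAt_inner_left w u)).gradient

lemma gradient_add_const {n : ℕ} (g : Euc n → ℝ) (q : Euc n) (c : ℝ) :
    gradient (fun x => g x + c) q = gradient g q := by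
  unfold gradient
  rw [fderiv_add_const]

/-- **Link with the discrete fractional Euler–Lagrange equation**: with `m = d` and
`f(x,v,t) = v`, any solution of the shifted discrete fractional Pontryagin system yields a
solution `Q` of the discrete fractional Euler–Lagrange equation. -/
theorem euler_lagrange_link
    (d N : ℕ) (hd : 1 ≤ d) (hN : 1 ≤ N)
    (a b : ℝ) (hab : a < b) (α : ℝ) (hα : 0 < α) (hα1 : α ≤ 1)
    (A : Euc d)
    (L : Euc d → Euc d → ℝ → ℝ)
    (hL : ContDiff ℝ 2 fun p : Euc d × Euc d × ℝ => L p.1 p.2.1 p.2.2)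
    (Q U P : ℕ → Euc d)
    (hsol : SigmaPS N α ((b - a) / (N : ℝ)) a A
      (fun x v w t => L x v t + ⟪w, v⟫) Q U P)
    (W : ℕ → Euc d)
    (hW : ∀ j, j < N → W j
      = gradient (fun v => L (Q (j + 1)) v (a + ((j : ℝ) + 1) * ((b - a) / (N : ℝ))))
          (cdMinus α ((b - a) / (N : ℝ)) Q (j + 1)))
    (hWN : W N = 0) :
    ∀ k, k < N →
      gradient
          (fun x => L x (cdMinus α ((b - a) / (N : ℝ)) Q (k + 1))
            (a + ((k : ℝ) + 1) * ((b - a) / (N : ℝ))))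
          (Q (k + 1))
        + dPlus N α ((b - a) / (N : ℝ)) W k = 0 := by
  set hs : ℝ := (b - a) / (N : ℝ) with hhs
  obtain ⟨hQ0, hPN, h1, h2, h3⟩ := hsol
  have hFd : Differentiable ℝ (fun p : Euc d × Euc d × ℝ => L p.1 p.2.1 p.2.2) :=
    hL.differentiable (by norm_num)
  have hdv : ∀ (x : Euc d) (t : ℝ) (u : Euc d), DifferentiableAt ℝ (fun v => L x v t) u := by
    intro x t u
    exact (hFd (x, u, t)).comp (f := fun v : Euc d => (x, v, t)) u
      ((differentiableAt_const x).prodMk (differentiableAt_id.prodMk (differentiableAt_const t)))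
  -- Step A : cdMinus Q k = U k
  have hcd : ∀ k, 1 ≤ k → k ≤ N → cdMinus α hs Q k = U k := by
    intro k hk1 hkN
    rw [h1 k hk1 hkN]
    exact gradient_const_add_inner _ _ _
  -- Step B : W j = - P j for j ≤ N
  have hWP : ∀ j, j ≤ N → W j = -P j := by
    intro j hj
    rcases eq_or_lt_of_le hj with rfl | hj
    · rw [hWN, hPN, neg_zero]
    · have h3' := h3 (j + 1) (by omega) (by omega)
      simp only [Nat.add_sub_cancel] at h3'
      rw [show (fun v => L (Q (j+1)) v (a + ((j+1 : ℕ) : ℝ) * hs) + ⟪P j, v⟫)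
            = (fun v => L (Q (j+1)) v (a + ((j : ℝ) + 1) * hs) + ⟪P j, v⟫) by
          push_cast; ring_nf] at h3'
      rw [gradient_add_inner (hdv _ _ _)] at h3'
      rw [hW j hj, hcd (j + 1) (by omega) (by omega)]
      exact eq_neg_of_add_eq_zero_left h3'
  -- conclusion
  intro k hk
  have h2' := h2 k hk
  rw [show (fun x => L x (U (k+1)) (a + ((k : ℝ) + 1) * hs) + ⟪P k, U (k+1)⟫)
        = (fun x => L x (U (k+1)) (a + ((k : ℝ) + 1) * hs) + ⟪P k, U (k+1)⟫) from rfl,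
    gradient_add_const] at h2'
  have hdw : dPlus N α hs W k = - dPlus N α hs P k := by
    unfold dPlus
    rw [← smul_neg, ← Finset.sum_neg_distrib]
    congr 1
    refine Finset.sum_congr rfl fun r hr => ?_
    rw [Finset.mem_range] at hr
    rw [hWP (k + r) (by omega), smul_neg]
  rw [hdw, hcd (k + 1) (by omega) (by omega), ← h2']
  simp
end
end

section
/- Discrete symmetry yields the Torres–Frederico-type identity: Let φ₁, φ₂, φ₃ be one-parameter groups of diffeomorphisms of ℝ^d, ℝ^m, ℝ^d respectively, and assume that the Hamiltonian H is ᶜΔ^α_−-invariant under (φ₁,φ₂,φ₃). Then for every solution (Q,U,P) of the shifted discrete fractional Pontryagin system (σPS) and every k = 1,…,N: ∂φ₁/∂s(0, Q_k) · (Δ^α_+ P)_{k−1} − (ᶜΔ^α_− G)_k · P_{k−1} = 0, where G ∈ (ℝ^d)^{N+1} is the sequence G_j = ∂φ₁/∂s(0, Q_j). -/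
open Finset Filter
open scoped RealInnerProductSpace Topology

noncomputable section

/-- The Hamiltonian `H(x,v,w,t) = L(x,v,t) + w · f(x,v,t)` associated to the Lagrangian `L`
and the constraint function `f`. -/
def Ham {d m : ℕ} (L : Euc d → Euc m → ℝ → ℝ) (f : Euc d → Euc m → ℝ → Euc d)
    (x : Euc d) (v : Euc m) (w : Euc d) (t : ℝ) : ℝ :=
  L x v t + ⟪w, f x v t⟫

/-- A one-parameter group of diffeomorphisms of `ℝ^n`: a `C²` map `φ : ℝ × ℝ^n → ℝ^n` with
`φ(0,·) = id`, `φ(s,·) ∘ φ(s',·) = φ(s+s',·)`, each `φ(s,·)` being a diffeomorphism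
(its inverse `φ(−s,·)` is automatically `C²`, so we only record bijectivity). -/
def OneParamGroup {n : ℕ} (φ : ℝ → Euc n → Euc n) : Prop :=
  ContDiff ℝ 2 (fun p : ℝ × Euc n => φ p.1 p.2) ∧
  (∀ x, φ 0 x = x) ∧
  (∀ s s' x, φ s (φ s' x) = φ (s + s') x) ∧
  (∀ s, Function.Bijective (φ s))

/-- The Hamiltonian `H` is `ᶜΔ^α_−`-invariant under the action of the three one-parameter
groups of diffeomorphisms `(φ₁, φ₂, φ₃)`. -/
def CDeltaInvariant {d m : ℕ} (N : ℕ) (α hstep a : ℝ) (A : Euc d)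
    (H : Euc d → Euc m → Euc d → ℝ → ℝ)
    (φ₁ : ℝ → Euc d → Euc d) (φ₂ : ℝ → Euc m → Euc m) (φ₃ : ℝ → Euc d → Euc d) : Prop :=
  ∀ (Q : ℕ → Euc d) (U : ℕ → Euc m) (P : ℕ → Euc d),
    SigmaPS N α hstep a A H Q U P → ∀ s : ℝ, ∀ k, 1 ≤ k → k ≤ N →
      H (φ₁ s (Q k)) (φ₂ s (U k)) (φ₃ s (P (k - 1))) (a + (k : ℝ) * hstep)
        - ⟪φ₃ s (P (k - 1)), cdMinus α hstep (fun j => φ₁ s (Q j)) k⟫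
      = H (Q k) (U k) (P (k - 1)) (a + (k : ℝ) * hstep)
        - ⟪P (k - 1), cdMinus α hstep Q k⟫

/-- auxiliary: inner with gradient is the Fréchet derivative (unconditionally, by definition). -/
lemma inner_gradient_eq {n : ℕ} (g : Euc n → ℝ) (x y : Euc n) :
    ⟪gradient g x, y⟫ = fderiv ℝ g x y := by
  simp [gradient, InnerProductSpace.toDual_symm_apply]

/-- auxiliary: the flow curve through a point is differentiable at `0`. -/
lemma opg_diffAt {n : ℕ} {φ : ℝ → Euc n → Euc n} (hφ : OneParamGroup φ) (y : Euc n) :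
    DifferentiableAt ℝ (fun s => φ s y) 0 := by
  have h2 : Differentiable ℝ (fun s : ℝ => ((s, y) : ℝ × Euc n)) := by fun_prop
  exact ((hφ.1.differentiable (by norm_num)).comp h2).differentiableAt

/-- **Discrete symmetry yields the Torres–Frederico-type identity.** -/
theorem discrete_symmetry_identity
    (d m N : ℕ) (hd : 1 ≤ d) (hm : 1 ≤ m) (hN : 1 ≤ N)
    (a b : ℝ) (hab : a < b) (α : ℝ) (hα : 0 < α) (hα1 : α ≤ 1)
    (A : Euc d)
    (f : Euc d → Euc m → ℝ → Euc d)
    (hf : ContDiff ℝ 2 fun p : Euc d × Euc m × ℝ => f p.1 p.2.1 p.2.2)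
    (L : Euc d → Euc m → ℝ → ℝ)
    (hL : ContDiff ℝ 2 fun p : Euc d × Euc m × ℝ => L p.1 p.2.1 p.2.2)
    (φ₁ : ℝ → Euc d → Euc d) (φ₂ : ℝ → Euc m → Euc m) (φ₃ : ℝ → Euc d → Euc d)
    (hφ₁ : OneParamGroup φ₁) (hφ₂ : OneParamGroup φ₂) (hφ₃ : OneParamGroup φ₃)
    (hinv : CDeltaInvariant N α ((b - a) / (N : ℝ)) a A (Ham L f) φ₁ φ₂ φ₃) :
    ∀ (Q : ℕ → Euc d) (U : ℕ → Euc m) (P : ℕ → Euc d),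
      SigmaPS N α ((b - a) / (N : ℝ)) a A (Ham L f) Q U P →
      ∀ k, 1 ≤ k → k ≤ N →
        ⟪deriv (fun s => φ₁ s (Q k)) 0, dPlus N α ((b - a) / (N : ℝ)) P (k - 1)⟫
          - ⟪cdMinus α ((b - a) / (N : ℝ)) (fun j => deriv (fun s => φ₁ s (Q j)) 0) k,
              P (k - 1)⟫
        = 0 := by
  intro Q U P hsol k hk1 hkN
  set h : ℝ := (b - a) / (N : ℝ) with hh
  set t : ℝ := a + (k : ℝ) * h with ht
  set G : ℕ → Euc d := fun j => deriv (fun s => φ₁ s (Q j)) 0 with hG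
  set ξ : Euc m := deriv (fun s => φ₂ s (U k)) 0 with hξ
  set η : Euc d := deriv (fun s => φ₃ s (P (k - 1))) 0 with hη
  -- derivatives of the flow curves
  have hGd : ∀ j, HasDerivAt (fun s => φ₁ s (Q j)) (G j) 0 :=
    fun j => (opg_diffAt hφ₁ (Q j)).hasDerivAt
  have hξd : HasDerivAt (fun s => φ₂ s (U k)) ξ 0 := (opg_diffAt hφ₂ (U k)).hasDerivAt
  have hηd : HasDerivAt (fun s => φ₃ s (P (k - 1))) η 0 := (opg_diffAt hφ₃ (P (k - 1))).hasDerivAt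
  -- derivative of s ↦ cdMinus of the moved curve
  have hS : HasDerivAt (fun s => cdMinus α h (fun j => φ₁ s (Q j)) k) (cdMinus α h G k) 0 := by
    simp only [cdMinus, dMinus]
    exact HasDerivAt.const_smul (h ^ (-α))
      (HasDerivAt.fun_sum fun r _ => (((hGd (k - r)).sub (hGd 0)).const_smul (glCoef α r)))
  -- the Hamiltonian as a function of the three moving variables
  set Φ : Euc d × Euc m × Euc d → ℝ := fun p => Ham L f p.1 p.2.1 p.2.2 t with hΦdef
  have hΦdiff : Differentiable ℝ Φ := by
    have hmap : Differentiable ℝ (fun p : Euc d × Euc m × Euc d => ((p.1, p.2.1, t) : Euc d × Euc m × ℝ)) := by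
      fun_prop
    have hLd : Differentiable ℝ (fun p : Euc d × Euc m × Euc d => L p.1 p.2.1 t) :=
      (hL.differentiable (by norm_num)).comp hmap
    have hfd : Differentiable ℝ (fun p : Euc d × Euc m × Euc d => f p.1 p.2.1 t) :=
      (hf.differentiable (by norm_num)).comp hmap
    have hwd : Differentiable ℝ (fun p : Euc d × Euc m × Euc d => p.2.2) := by fun_prop
    simpa only [hΦdef, Ham] using hLd.fun_add (hwd.inner ℝ hfd)
  set p₀ : Euc d × Euc m × Euc d := (Q k, U k, P (k - 1)) with hp₀
  set DΦ : (Euc d × Euc m × Euc d) →L[ℝ] ℝ := fderiv ℝ Φ p₀ with hDΦ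
  have hΦat : HasFDerivAt Φ DΦ p₀ := (hΦdiff p₀).hasFDerivAt
  -- the moving point curve
  have hγ : HasDerivAt (fun s => ((φ₁ s (Q k), φ₂ s (U k), φ₃ s (P (k - 1))) : Euc d × Euc m × Euc d))
      ((G k, ξ, η)) 0 := HasDerivAt.prodMk (hGd k) (HasDerivAt.prodMk hξd hηd)
  have hγ0 : (fun s => ((φ₁ s (Q k), φ₂ s (U k), φ₃ s (P (k - 1))) : Euc d × Euc m × Euc d)) 0 = p₀ := by
    simp [hp₀, hφ₁.2.1, hφ₂.2.1, hφ₃.2.1]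
  have hF1 : HasDerivAt (fun s => Φ (φ₁ s (Q k), φ₂ s (U k), φ₃ s (P (k - 1))))
      (DΦ (G k, ξ, η)) 0 := by
    have hΦat' : HasFDerivAt Φ DΦ
        ((φ₁ 0 (Q k), φ₂ 0 (U k), φ₃ 0 (P (k - 1))) : Euc d × Euc m × Euc d) := by
      rw [hφ₁.2.1, hφ₂.2.1, hφ₃.2.1]; exact hΦat
    exact hΦat'.comp_hasDerivAt 0 hγ
  -- derivative of the inner-product term
  have hφ10 : (fun j => φ₁ (0 : ℝ) (Q j)) = Q := funext fun j => hφ₁.2.1 (Q j)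
  have hF2 : HasDerivAt (fun s => (⟪φ₃ s (P (k - 1)), cdMinus α h (fun j => φ₁ s (Q j)) k⟫ : ℝ))
      (⟪P (k - 1), cdMinus α h G k⟫ + ⟪η, cdMinus α h Q k⟫) 0 := by
    have := hηd.inner ℝ hS
    simpa [hφ₁.2.1, hφ₃.2.1, hφ10] using this
  -- the invariance says the combined quantity is constant in s
  set C : ℝ := Ham L f (Q k) (U k) (P (k - 1)) t - ⟪P (k - 1), cdMinus α h Q k⟫ with hC
  have hFconst : (fun s => Φ (φ₁ s (Q k), φ₂ s (U k), φ₃ s (P (k - 1)))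
      - (⟪φ₃ s (P (k - 1)), cdMinus α h (fun j => φ₁ s (Q j)) k⟫ : ℝ)) = fun _ => C := by
    funext s
    exact hinv Q U P hsol s k hk1 hkN
  have hF : HasDerivAt (fun s => Φ (φ₁ s (Q k), φ₂ s (U k), φ₃ s (P (k - 1)))
      - (⟪φ₃ s (P (k - 1)), cdMinus α h (fun j => φ₁ s (Q j)) k⟫ : ℝ))
      (DΦ (G k, ξ, η) - (⟪P (k - 1), cdMinus α h G k⟫ + ⟪η, cdMinus α h Q k⟫)) 0 := hF1.sub hF2
  have hzero : DΦ (G k, ξ, η)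
      - (⟪P (k - 1), cdMinus α h G k⟫ + ⟪η, cdMinus α h Q k⟫) = 0 := by
    have h0 : HasDerivAt (fun _ : ℝ => C) 0 0 := hasDerivAt_const 0 C
    exact (hFconst ▸ hF).unique h0
  -- decompose DΦ into partial derivatives
  obtain ⟨hQ0, hPN, hgw, hgx, hgv⟩ := hsol
  -- partial in x
  have hinc1 : HasFDerivAt (fun y : Euc d => ((y, (U k, P (k - 1))) : Euc d × Euc m × Euc d))
      ((ContinuousLinearMap.id ℝ (Euc d)).prod 0) (Q k) :=
    HasFDerivAt.prodMk (hasFDerivAt_id (Q k)) (hasFDerivAt_const _ _)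
  have hpx : HasFDerivAt (fun y : Euc d => Φ (y, U k, P (k - 1)))
      (DΦ.comp ((ContinuousLinearMap.id ℝ (Euc d)).prod 0)) (Q k) := by have := hΦat.comp (Q k) hinc1; exact this
  have hgradx : ⟪gradient (fun y : Euc d => Φ (y, U k, P (k - 1))) (Q k), G k⟫
      = DΦ (G k, 0, 0) := by
    rw [inner_gradient_eq, hpx.fderiv]; rfl
  -- partial in v
  have hinc2 : HasFDerivAt (fun y : Euc m => ((Q k, (y, P (k - 1))) : Euc d × Euc m × Euc d))
      ((0 : Euc m →L[ℝ] Euc d).prod ((ContinuousLinearMap.id ℝ (Euc m)).prod 0)) (U k) :=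
    HasFDerivAt.prodMk (hasFDerivAt_const _ _) (HasFDerivAt.prodMk (hasFDerivAt_id (U k)) (hasFDerivAt_const _ _))
  have hpv : HasFDerivAt (fun y : Euc m => Φ (Q k, y, P (k - 1)))
      (DΦ.comp ((0 : Euc m →L[ℝ] Euc d).prod ((ContinuousLinearMap.id ℝ (Euc m)).prod 0))) (U k) :=
    by have := hΦat.comp (U k) hinc2; exact this
  have hgradv : ⟪gradient (fun y : Euc m => Φ (Q k, y, P (k - 1))) (U k), ξ⟫
      = DΦ (0, ξ, 0) := by
    rw [inner_gradient_eq, hpv.fderiv]; rfl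
  -- partial in w
  have hinc3 : HasFDerivAt (fun y : Euc d => ((Q k, (U k, y)) : Euc d × Euc m × Euc d))
      ((0 : Euc d →L[ℝ] Euc d).prod ((0 : Euc d →L[ℝ] Euc m).prod (ContinuousLinearMap.id ℝ (Euc d)))) (P (k - 1)) :=
    HasFDerivAt.prodMk (hasFDerivAt_const _ _) (HasFDerivAt.prodMk (hasFDerivAt_const _ _) (hasFDerivAt_id (P (k - 1))))
  have hpw : HasFDerivAt (fun y : Euc d => Φ (Q k, U k, y))
      (DΦ.comp ((0 : Euc d →L[ℝ] Euc d).prod ((0 : Euc d →L[ℝ] Euc m).prod (ContinuousLinearMap.id ℝ (Euc d))))) (P (k - 1)) :=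
    by have := hΦat.comp (P (k - 1)) hinc3; exact this
  have hgradw : ⟪gradient (fun y : Euc d => Φ (Q k, U k, y)) (P (k - 1)), η⟫
      = DΦ (0, 0, η) := by
    rw [inner_gradient_eq, hpw.fderiv]; rfl
  -- identify the three gradients via (σPS)
  have hvz : gradient (fun y : Euc m => Φ (Q k, y, P (k - 1))) (U k) = 0 := by
    simpa only [hΦdef] using hgv k hk1 hkN
  have hwz : gradient (fun y : Euc d => Φ (Q k, U k, y)) (P (k - 1)) = cdMinus α h Q k := by
    have := hgw k hk1 hkN
    simp only [hΦdef]
    exact this.symm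
  have hk' : k - 1 + 1 = k := Nat.succ_pred_eq_of_pos hk1
  have hkN' : k - 1 < N := by omega
  have hxz : gradient (fun y : Euc d => Φ (y, U k, P (k - 1))) (Q k) = dPlus N α h P (k - 1) := by
    have h4 := hgx (k - 1) hkN'
    have hcast : ((↑(k - 1) : ℝ) + 1) = (k : ℝ) := by
      have : ((k - 1 : ℕ) : ℝ) = (k : ℝ) - 1 := by
        have : (1 : ℕ) ≤ k := hk1
        push_cast [Nat.cast_sub this]
        ring
      rw [this]; ring
    rw [hk', hcast] at h4
    simp only [hΦdef, ← ht]
    exact h4.symm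
  -- split DΦ (G k, ξ, η) by linearity
  have hsplit : DΦ (G k, ξ, η) = DΦ (G k, 0, 0) + DΦ (0, ξ, 0) + DΦ (0, 0, η) := by
    rw [← map_add, ← map_add]
    congr 1
    simp [Prod.ext_iff]
  rw [hsplit, ← hgradx, ← hgradv, ← hgradw, hvz, hwz, hxz] at hzero
  simp only [inner_zero_left] at hzero
  have hfin : ⟪dPlus N α h P (k - 1), G k⟫ - ⟪P (k - 1), cdMinus α h G k⟫ = 0 := by
    have := hzero
    rw [real_inner_comm (cdMinus α h Q k) η] at this
    linarith [this]
  have goal' : ⟪G k, dPlus N α h P (k - 1)⟫ - ⟪cdMinus α h G k, P (k - 1)⟫ = 0 := by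
    linarith [hfin, real_inner_comm (G k) (dPlus N α h P (k - 1)),
      real_inner_comm (cdMinus α h G k) (P (k - 1))]
  exact goal'
end
end
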